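/- arXiv:1908.10575 — 4 statements merged into one kernel-verified Lean document; each statement's English description precedes it below -/
import Mathlib

section
/- Let X be a topological space, I a finite index set with |I| elements, (U_μ)_{μ∈I} an open cover of X, and A a unital C*-algebra. Let (η_μ)_{μ∈I} be a square-root partition of unity subordinate to the cover. Let v¹ = (v¹_{μν}) and v² = (v²_{μν}) be two unitary Čech 1-cocycles subordinate to the cover, let (u_μ)_{μ∈I} be unitaries in A with ‖ u_μ·v¹_{μν}(x)·u_ν* − v²_{μν}(x) ‖ < ε for all μ, ν ∈ I and x ∈ U_μ ∩ U_ν, and assume 0 < ε < 1/(3·(|I|² + 1)). Then there exists a family of continuous maps ū_μ : X → A (μ ∈ I) such that: for every x ∈ U_μ the element ū_μ(x) is unitary and ‖ ū_μ(x) − u_μ ‖ < (|I|² + 1)·ε, and for every x ∈ U_μ ∩ U_ν one has ū_μ(x)·v¹_{μν}(x)·ū_ν(x)* = v²_{μν}(x). -/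
/-- A unitary Čech 1-cocycle subordinate to the open cover `U`, with values in a unital
C*-algebra `A`. -/
def IsUnitaryCechCocycle {X I A : Type*} [TopologicalSpace X] [NormedRing A] [StarRing A]
    (U : I → Set X) (v : I → I → X → A) : Prop :=
  (∀ μ ν, Continuous (v μ ν)) ∧
  (∀ μ ν, ∀ x ∈ U μ ∩ U ν, v μ ν x ∈ unitary A) ∧
  (∀ μ ν, ∀ x ∈ U μ ∩ U ν, star (v μ ν x) = v ν μ x) ∧
  (∀ μ, ∀ x ∈ U μ, v μ μ x = 1) ∧
  (∀ μ ν σ, ∀ x ∈ U μ ∩ U ν ∩ U σ, v μ ν x * v ν σ x = v μ σ x)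

/-- A square-root partition of unity subordinate to the cover `U`. -/
def IsSqrtPartitionOfUnity {X I : Type*} [TopologicalSpace X] [Fintype I]
    (U : I → Set X) (η : I → X → ℝ) : Prop :=
  (∀ μ, Continuous (η μ)) ∧ (∀ μ x, 0 ≤ η μ x) ∧
  (∀ μ x, η μ x ≠ 0 → x ∈ U μ) ∧ (∀ x, ∑ μ, (η μ x) ^ 2 = 1)

namespace CechGaugeAux

open Polynomial Filter

noncomputable def babP : ℕ → Polynomial ℝ
  | 0 => 1
  | n + 1 => Polynomial.C (2⁻¹ : ℝ) * (babP n * (3 - Polynomial.X * babP n ^ 2))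

noncomputable def errPoly (n : ℕ) : Polynomial ℝ := 1 - Polynomial.X * babP n ^ 2

lemma errPoly_succ (n : ℕ) :
    errPoly (n + 1) = Polynomial.C (4⁻¹ : ℝ) * (3 * errPoly n ^ 2 + errPoly n ^ 3) := by
  have hc : (Polynomial.C (2⁻¹ : ℝ)) ^ 2 * 4 = 1 := by
    rw [← map_pow, ← map_ofNat (Polynomial.C : ℝ →+* Polynomial ℝ) 4, ← map_mul, ← map_one
      (Polynomial.C : ℝ →+* Polynomial ℝ)]
    norm_num
  have h4 : (Polynomial.C (4⁻¹:ℝ)) = Polynomial.C (2⁻¹:ℝ) * Polynomial.C (2⁻¹:ℝ) := by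
    rw [← Polynomial.C_mul]; norm_num
  simp only [errPoly, babP]
  rw [h4]
  linear_combination -hc

lemma babP_succ_sub (n : ℕ) :
    babP (n + 1) - babP n = Polynomial.C (2⁻¹ : ℝ) * (babP n * errPoly n) := by
  have hc2 : (Polynomial.C (2⁻¹ : ℝ)) * 2 = 1 := by
    rw [← map_ofNat (Polynomial.C : ℝ →+* Polynomial ℝ) 2, ← map_mul, ← map_one
      (Polynomial.C : ℝ →+* Polynomial ℝ)]
    norm_num
  simp only [errPoly, babP]
  linear_combination (babP n) * hc2

variable {A : Type*} [CStarAlgebra A]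

lemma aeval_selfadjoint {m : A} (hm : star m = m) (p : Polynomial ℝ) :
    star (aeval m p) = aeval m p := by
  rw [aeval_eq_sum_range, star_sum]
  refine Finset.sum_congr rfl fun i _ => ?_
  rw [star_smul, star_pow, hm, star_trivial]

lemma aeval_commute (m : A) (p : Polynomial ℝ) : Commute m (aeval m p) := by
  rw [aeval_eq_sum_range]
  exact Commute.sum_right _ _ _ fun i _ => ((Commute.refl m).pow_right i).smul_right _

lemma aeval_conj {w m : A} (h1 : star w * w = 1) (h2 : w * star w = 1) (p : Polynomial ℝ) :
    aeval (star w * m * w) p = star w * aeval m p * w := by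
  have hpow : ∀ i : ℕ, (star w * m * w) ^ i = star w * m ^ i * w := by
    intro i
    induction i with
    | zero => simp only [pow_zero, mul_one, h1]
    | succ n ih =>
        rw [pow_succ, pow_succ, ih]
        simp only [mul_assoc]
        rw [show w * (star w * (m * w)) = m * w by rw [← mul_assoc, h2, one_mul]]
  rw [aeval_eq_sum_range, aeval_eq_sum_range, Finset.mul_sum, Finset.sum_mul]
  refine Finset.sum_congr rfl fun i _ => ?_
  rw [mul_smul_comm, smul_mul_assoc, hpow]

lemma bab_bound [Nontrivial A] {m : A} (hm : ‖1 - m‖ ≤ 5⁻¹) (n : ℕ) :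
    ‖aeval m (errPoly n)‖ ≤ ‖1 - m‖ * (5⁻¹:ℝ)^n ∧ ‖aeval m (babP n)‖ ≤ 2 - (5⁻¹:ℝ)^n := by
  induction n with
  | zero =>
    constructor
    · simp [errPoly, babP]
    · simp only [babP, map_one, norm_one, pow_zero]; norm_num
  | succ n ih =>
    obtain ⟨ihe, ihy⟩ := ih
    set E := aeval m (errPoly n) with hE
    set Y := aeval m (babP n) with hY
    have hd0 : (0:ℝ) ≤ ‖1 - m‖ := norm_nonneg _
    have hp0 : (0:ℝ) < (5⁻¹:ℝ)^n := by positivity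
    have hp1 : (5⁻¹:ℝ)^n ≤ 1 := pow_le_one₀ (by norm_num) (by norm_num)
    have hE0 : (0:ℝ) ≤ ‖E‖ := norm_nonneg _
    have hY0 : (0:ℝ) ≤ ‖Y‖ := norm_nonneg _
    have hE5 : ‖E‖ ≤ 5⁻¹ := le_trans ihe (by nlinarith)
    have hY2 : ‖Y‖ ≤ 2 := le_trans ihy (by nlinarith)
    have h3 : ‖(3:A)‖ = 3 := by
      rw [← map_ofNat (algebraMap ℝ A) 3, norm_algebraMap']; norm_num
    constructor
    · have heq : aeval m (errPoly (n+1)) = algebraMap ℝ A (4⁻¹:ℝ) * (3 * E^2 + E^3) := by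
        rw [errPoly_succ]
        simp [map_ofNat, hE]
      rw [heq]
      have h1 : ‖(3:A) * E^2‖ ≤ 3 * ‖E‖^2 := by
        calc ‖(3:A) * E^2‖ ≤ ‖(3:A)‖ * ‖E^2‖ := norm_mul_le _ _
        _ ≤ 3 * ‖E‖^2 := by rw [h3]; gcongr; exact norm_pow_le' E two_pos
      have h2 : ‖E^3‖ ≤ ‖E‖^3 := norm_pow_le' E three_pos
      have h4 : ‖algebraMap ℝ A (4⁻¹:ℝ) * (3*E^2 + E^3)‖ ≤ 4⁻¹ * (3*‖E‖^2 + ‖E‖^3) := by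
        calc ‖algebraMap ℝ A (4⁻¹:ℝ) * (3*E^2+E^3)‖
            ≤ ‖algebraMap ℝ A (4⁻¹:ℝ)‖ * ‖3*E^2+E^3‖ := norm_mul_le _ _
        _ = 4⁻¹ * ‖3*E^2+E^3‖ := by rw [norm_algebraMap']; norm_num
        _ ≤ 4⁻¹ * (3*‖E‖^2 + ‖E‖^3) := by
            have := norm_add_le ((3:A)*E^2) (E^3)
            nlinarith
      refine h4.trans ?_
      have key : 4⁻¹ * (3*‖E‖^2 + ‖E‖^3) ≤ ‖E‖^2 := by nlinarith
      refine key.trans ?_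
      have hdp : ‖1-m‖ * (5⁻¹:ℝ)^n ≤ 5⁻¹ := by nlinarith
      have hdp0 : (0:ℝ) ≤ ‖1-m‖ * (5⁻¹:ℝ)^n := by positivity
      calc ‖E‖^2 ≤ (‖1-m‖ * (5⁻¹:ℝ)^n)^2 := by nlinarith
      _ ≤ ‖1-m‖ * (5⁻¹:ℝ)^(n+1) := by
          rw [show (5⁻¹:ℝ)^(n+1) = (5⁻¹:ℝ)^n * 5⁻¹ from pow_succ _ _]
          nlinarith [mul_le_mul_of_nonneg_left hdp hdp0]
    · have hsub : aeval m (babP (n+1)) - Y = algebraMap ℝ A (2⁻¹:ℝ) * (Y * E) := by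
        rw [hY, hE, ← map_sub, babP_succ_sub]
        simp
      have hns : ‖aeval m (babP (n+1)) - Y‖ ≤ 2⁻¹ * (‖Y‖ * ‖E‖) := by
        rw [hsub]
        calc ‖algebraMap ℝ A (2⁻¹:ℝ) * (Y*E)‖ ≤ ‖algebraMap ℝ A (2⁻¹:ℝ)‖ * ‖Y*E‖ :=
              norm_mul_le _ _
        _ ≤ 2⁻¹ * (‖Y‖ * ‖E‖) := by
            rw [norm_algebraMap', show ‖(2⁻¹:ℝ)‖ = 2⁻¹ by norm_num]
            gcongr
            exact norm_mul_le Y E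
      have : ‖aeval m (babP (n+1))‖ ≤ ‖Y‖ + 2⁻¹*(‖Y‖*‖E‖) := by
        have := norm_add_le (aeval m (babP (n+1)) - Y) Y
        simp only [sub_add_cancel] at this
        nlinarith
      refine this.trans ?_
      rw [show (5⁻¹:ℝ)^(n+1) = (5⁻¹:ℝ)^n * 5⁻¹ from pow_succ _ _]
      nlinarith

lemma bab_diff [Nontrivial A] {m : A} (hm : ‖1 - m‖ ≤ 5⁻¹) (n : ℕ) :
    ‖aeval m (babP (n+1)) - aeval m (babP n)‖ ≤ ‖1 - m‖ * (5⁻¹:ℝ)^n := by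
  obtain ⟨ihe, ihy⟩ := bab_bound hm n
  have hsub : aeval m (babP (n+1)) - aeval m (babP n)
      = algebraMap ℝ A (2⁻¹:ℝ) * (aeval m (babP n) * aeval m (errPoly n)) := by
    rw [← map_sub, babP_succ_sub]; simp
  rw [hsub]
  have h1 : ‖algebraMap ℝ A (2⁻¹:ℝ)‖ = 2⁻¹ := by rw [norm_algebraMap']; norm_num
  calc ‖algebraMap ℝ A (2⁻¹:ℝ) * (aeval m (babP n) * aeval m (errPoly n))‖
      ≤ ‖algebraMap ℝ A (2⁻¹:ℝ)‖ * ‖aeval m (babP n) * aeval m (errPoly n)‖ := norm_mul_le _ _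
  _ ≤ 2⁻¹ * (‖aeval m (babP n)‖ * ‖aeval m (errPoly n)‖) := by
      rw [h1]; gcongr; exact norm_mul_le _ _
  _ ≤ ‖1 - m‖ * (5⁻¹:ℝ)^n := by
      have h2 : ‖aeval m (babP n)‖ ≤ 2 := le_trans ihy (by
        have : (0:ℝ) < (5⁻¹:ℝ)^n := by positivity
        linarith)
      have := norm_nonneg (aeval m (errPoly n))
      have := norm_nonneg (aeval m (babP n))
      nlinarith

noncomputable def glim (m : A) : A :=
  1 + ∑' n : ℕ, (aeval m (babP (n+1)) - aeval m (babP n))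

lemma summable_geom5 : Summable fun n : ℕ => (5⁻¹:ℝ)^n :=
  summable_geometric_of_lt_one (by norm_num) (by norm_num)

lemma summable_bab [Nontrivial A] {m : A} (hm : ‖1 - m‖ ≤ 5⁻¹) :
    Summable fun n : ℕ => aeval m (babP (n+1)) - aeval m (babP n) :=
  Summable.of_norm_bounded (summable_geom5.mul_left ‖1 - m‖) (bab_diff hm)

lemma glim_tendsto [Nontrivial A] {m : A} (hm : ‖1 - m‖ ≤ 5⁻¹) :
    Tendsto (fun N => aeval m (babP N)) atTop (nhds (glim m)) := by
  have hs := (summable_bab hm).hasSum.tendsto_sum_nat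
  have heq : ∀ N, ∑ i ∈ Finset.range N, (aeval m (babP (i+1)) - aeval m (babP i))
      = aeval m (babP N) - 1 := by
    intro N
    rw [Finset.sum_range_sub (fun i => aeval m (babP i))]
    simp [babP]
  simp only [heq] at hs
  have h2 := hs.add_const 1
  simp only [sub_add_cancel] at h2
  rw [show glim m = (∑' n : ℕ, (aeval m (babP (n+1)) - aeval m (babP n))) + 1 from
    add_comm _ _]
  exact h2

lemma glim_norm [Nontrivial A] {m : A} (hm : ‖1 - m‖ ≤ 5⁻¹) :
    ‖glim m - 1‖ ≤ ‖1 - m‖ * (5/4 : ℝ) := by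
  have hsum : Summable fun n : ℕ => ‖aeval m (babP (n+1)) - aeval m (babP n)‖ :=
    Summable.of_nonneg_of_le (fun n => norm_nonneg _) (bab_diff hm)
      (summable_geom5.mul_left ‖1 - m‖)
  have h0 : glim m - 1 = ∑' n : ℕ, (aeval m (babP (n+1)) - aeval m (babP n)) := by
    rw [glim]; exact add_sub_cancel_left _ _
  rw [h0]
  calc ‖∑' n : ℕ, (aeval m (babP (n+1)) - aeval m (babP n))‖
      ≤ ∑' n : ℕ, ‖aeval m (babP (n+1)) - aeval m (babP n)‖ := norm_tsum_le_tsum_norm hsum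
  _ ≤ ∑' n : ℕ, ‖1 - m‖ * (5⁻¹:ℝ)^n :=
      Summable.tsum_le_tsum (bab_diff hm) hsum (summable_geom5.mul_left ‖1 - m‖)
  _ = ‖1 - m‖ * (5/4 : ℝ) := by
      rw [tsum_mul_left, tsum_geometric_of_lt_one (by norm_num) (by norm_num)]
      norm_num

lemma glim_selfadjoint [Nontrivial A] {m : A} (hm : ‖1 - m‖ ≤ 5⁻¹) (hsa : star m = m) :
    star (glim m) = glim m := by
  have h1 := glim_tendsto hm
  have h2 : Tendsto (fun N => star (aeval m (babP N))) atTop (nhds (star (glim m))) := h1.star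
  simp only [aeval_selfadjoint hsa] at h2
  exact tendsto_nhds_unique h2 h1

lemma glim_commute [Nontrivial A] {m : A} (hm : ‖1 - m‖ ≤ 5⁻¹) :
    m * glim m = glim m * m := by
  have h1 := (glim_tendsto hm).const_mul m
  have h2 := (glim_tendsto hm).mul_const m
  have he : ∀ N, m * aeval m (babP N) = aeval m (babP N) * m :=
    fun N => (aeval_commute m (babP N)).eq
  simp only [he] at h1
  exact tendsto_nhds_unique h1 h2

lemma glim_mul_self [Nontrivial A] {m : A} (hm : ‖1 - m‖ ≤ 5⁻¹) :
    m * (glim m * glim m) = 1 := by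
  have herr : Tendsto (fun N => aeval m (errPoly N)) atTop (nhds 0) := by
    refine squeeze_zero_norm (fun N => (bab_bound hm N).1) ?_
    have := (tendsto_pow_atTop_nhds_zero_of_lt_one (show (0:ℝ) ≤ 5⁻¹ by norm_num)
      (by norm_num)).const_mul ‖1 - m‖
    simpa using this
  have hrel : ∀ N, m * (aeval m (babP N) * aeval m (babP N)) = 1 - aeval m (errPoly N) := by
    intro N
    have h : aeval m (errPoly N) = 1 - m * (aeval m (babP N) * aeval m (babP N)) := by
      simp [errPoly, sq, mul_assoc]
    rw [h, sub_sub_cancel]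
  have h1 : Tendsto (fun N => m * (aeval m (babP N) * aeval m (babP N))) atTop
      (nhds (m * (glim m * glim m))) := ((glim_tendsto hm).mul (glim_tendsto hm)).const_mul m
  have h2 : Tendsto (fun N => m * (aeval m (babP N) * aeval m (babP N))) atTop (nhds 1) := by
    simp only [hrel]
    simpa using tendsto_const_nhds.sub herr
  exact tendsto_nhds_unique h1 h2

lemma glim_conj [Nontrivial A] {w m : A} (h1 : star w * w = 1) (h2 : w * star w = 1)
    (hm : ‖1 - m‖ ≤ 5⁻¹) (hm' : ‖1 - star w * m * w‖ ≤ 5⁻¹) :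
    glim (star w * m * w) = star w * glim m * w := by
  have ha := glim_tendsto hm'
  simp only [aeval_conj h1 h2] at ha
  have hb := ((glim_tendsto hm).const_mul (star w)).mul_const w
  exact tendsto_nhds_unique ha hb

end CechGaugeAux

set_option maxHeartbeats 1000000

/-- Lemma `lem:gauge`(1) with explicit constant `C₁ = |I|² + 1`: an
ε-approximate intertwiner `(u_μ)` between two unitary Čech cocycles can be deformed to an
exact gauge transformation `(ū_μ)` at distance at most `C₁ ε`, provided
`0 < ε < 1/(3 C₁)`. -/
theorem approximate_intertwiner_to_exact
    {X I A : Type*} [TopologicalSpace X] [Fintype I] [CStarAlgebra A]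
    (U : I → Set X) (hopen : ∀ μ, IsOpen (U μ)) (hcover : ∀ x, ∃ μ, x ∈ U μ)
    (η : I → X → ℝ) (hη : IsSqrtPartitionOfUnity U η)
    (v1 v2 : I → I → X → A)
    (h1 : IsUnitaryCechCocycle U v1) (h2 : IsUnitaryCechCocycle U v2)
    (u : I → A) (hu : ∀ μ, u μ ∈ unitary A)
    (ε : ℝ) (hε0 : 0 < ε) (hε : ε < 1 / (3 * ((Fintype.card I : ℝ) ^ 2 + 1)))
    (hclose : ∀ μ ν, ∀ x ∈ U μ ∩ U ν, ‖u μ * v1 μ ν x * star (u ν) - v2 μ ν x‖ < ε) :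
    ∃ ub : I → X → A,
      (∀ μ, Continuous (ub μ)) ∧
      (∀ μ, ∀ x ∈ U μ, ub μ x ∈ unitary A ∧
        ‖ub μ x - u μ‖ < ((Fintype.card I : ℝ) ^ 2 + 1) * ε) ∧
      (∀ μ ν, ∀ x ∈ U μ ∩ U ν, ub μ x * v1 μ ν x * star (ub ν x) = v2 μ ν x) := by
  classical
  obtain ⟨ηcont, ηpos, ηsupp, ηsum⟩ := hη
  obtain ⟨v1cont, v1unit, v1star, v1diag, v1coc⟩ := h1
  obtain ⟨v2cont, v2unit, v2star, v2diag, v2coc⟩ := h2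
  have huu : ∀ μ, star (u μ) * u μ = 1 ∧ u μ * star (u μ) = 1 :=
    fun μ => Unitary.mem_iff.mp (hu μ)
  have hCpos : (0:ℝ) < ((Fintype.card I : ℝ) ^ 2 + 1) * ε := by positivity
  by_cases hI : Fintype.card I ≤ 1
  · -- trivial case: at most one index
    refine ⟨fun μ _ => u μ, fun μ => continuous_const, fun μ x _ => ⟨hu μ, by simpa using hCpos⟩,
      ?_⟩
    intro μ ν x hx
    have hμν : μ = ν := Fintype.card_le_one_iff.mp hI μ ν
    subst hμν
    rw [v1diag μ x hx.1, mul_one, (huu μ).2, v2diag μ x hx.1]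
  -- main case
  rcases subsingleton_or_nontrivial A with hA | hA
  · refine ⟨fun μ _ => u μ, fun μ => continuous_const, fun μ x _ => ⟨hu μ, by simpa using hCpos⟩,
      fun μ ν x _ => Subsingleton.elim _ _⟩
  have hcard : 2 ≤ Fintype.card I := by omega
  have hc2 : (2:ℝ) ≤ (Fintype.card I : ℝ) := by exact_mod_cast hcard
  have hC5 : (5:ℝ) ≤ (Fintype.card I : ℝ) ^ 2 + 1 := by nlinarith
  have hε15 : ε < 1/15 := by
    refine lt_of_lt_of_le hε ?_
    rw [div_le_div_iff₀ (by positivity) (by norm_num)]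
    nlinarith
  -- the averaged intertwiner
  set a : I → X → A := fun μ x => ∑ σ, (η σ x)^2 • (v2 μ σ x * u σ * v1 σ μ x) with ha_def
  have ha_cont : ∀ μ, Continuous (a μ) := by
    intro μ
    apply continuous_finset_sum
    intro σ _
    exact ((ηcont σ).pow 2).smul (((v2cont μ σ).mul continuous_const).mul (v1cont σ μ))
  have ha_norm : ∀ μ, ∀ x ∈ U μ, ‖a μ x - u μ‖ < ε := by
    intro μ x hxμ
    have hkey : ∀ σ, η σ x ≠ 0 → ‖v2 μ σ x * u σ * v1 σ μ x - u μ‖ < ε := by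
      intro σ hσ
      have hxσ : x ∈ U σ := ηsupp σ x hσ
      have hv : v1 μ σ x * v1 σ μ x = 1 := by
        rw [v1coc μ σ μ x ⟨⟨hxμ, hxσ⟩, hxμ⟩, v1diag μ x hxμ]
      have hre : (u μ * v1 μ σ x * star (u σ)) * (u σ * v1 σ μ x) = u μ := by
        simp only [mul_assoc]
        rw [show star (u σ) * (u σ * v1 σ μ x) = v1 σ μ x from by
          rw [← mul_assoc, (huu σ).1, one_mul]]
        rw [show v1 μ σ x * v1 σ μ x = 1 from hv, mul_one]
      have hfact : v2 μ σ x * u σ * v1 σ μ x - u μ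
          = (v2 μ σ x - u μ * v1 μ σ x * star (u σ)) * (u σ * v1 σ μ x) := by
        rw [sub_mul, hre, ← mul_assoc]
      rw [hfact, CStarRing.norm_mul_mem_unitary _ (mul_mem (hu σ) (v1unit σ μ x ⟨hxσ, hxμ⟩)),
        norm_sub_rev]
      exact hclose μ σ x ⟨hxμ, hxσ⟩
    have hrw : a μ x - u μ = ∑ σ, (η σ x)^2 • (v2 μ σ x * u σ * v1 σ μ x - u μ) := by
      simp only [ha_def, smul_sub, Finset.sum_sub_distrib]
      rw [← Finset.sum_smul, ηsum x, one_smul]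
    obtain ⟨σ0, hσ0⟩ : ∃ σ, η σ x ≠ 0 := by
      by_contra h
      push_neg at h
      have := ηsum x
      simp [h] at this
    rw [hrw]
    calc ‖∑ σ, (η σ x)^2 • (v2 μ σ x * u σ * v1 σ μ x - u μ)‖
        ≤ ∑ σ, ‖(η σ x)^2 • (v2 μ σ x * u σ * v1 σ μ x - u μ)‖ := norm_sum_le _ _
    _ < ∑ σ, (η σ x)^2 * ε := by
        refine Finset.sum_lt_sum (fun σ _ => ?_) ⟨σ0, Finset.mem_univ σ0, ?_⟩
        · rw [norm_smul, Real.norm_of_nonneg (by positivity)]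
          by_cases hσ : η σ x = 0
          · simp [hσ]
          · exact mul_le_mul_of_nonneg_left (hkey σ hσ).le (by positivity)
        · rw [norm_smul, Real.norm_of_nonneg (by positivity)]
          have hpos : 0 < (η σ0 x)^2 := by positivity
          exact mul_lt_mul_of_pos_left (hkey σ0 hσ0) hpos
    _ = ε := by rw [← Finset.sum_mul, ηsum x, one_mul]
  have ha_coc : ∀ μ ν, ∀ x ∈ U μ ∩ U ν, a μ x * v1 μ ν x = v2 μ ν x * a ν x := by
    intro μ ν x hx
    obtain ⟨hxμ, hxν⟩ := hx
    simp only [ha_def]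
    rw [Finset.sum_mul, Finset.mul_sum]
    refine Finset.sum_congr rfl fun σ _ => ?_
    by_cases hσ : η σ x = 0
    · simp [hσ]
    · have hxσ : x ∈ U σ := ηsupp σ x hσ
      rw [smul_mul_assoc, mul_smul_comm]
      congr 1
      have e1 : v1 σ μ x * v1 μ ν x = v1 σ ν x := v1coc σ μ ν x ⟨⟨hxσ, hxμ⟩, hxν⟩
      have e2 : v2 μ ν x * v2 ν σ x = v2 μ σ x := v2coc μ ν σ x ⟨⟨hxμ, hxν⟩, hxσ⟩
      calc v2 μ σ x * u σ * v1 σ μ x * v1 μ ν x = v2 μ σ x * u σ * (v1 σ μ x * v1 μ ν x) := by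
            simp only [mul_assoc]
      _ = v2 μ σ x * u σ * v1 σ ν x := by rw [e1]
      _ = v2 μ ν x * (v2 ν σ x * u σ * v1 σ ν x) := by rw [← e2]; simp only [mul_assoc]
  -- clamping to make the construction globally defined
  set θ : I → X → ℝ := fun μ x => max 0 (min 1 ((2*ε - ‖a μ x - u μ‖)/ε)) with hθ_def
  set b : I → X → A := fun μ x => u μ + θ μ x • (a μ x - u μ) with hb_def
  have hθ0 : ∀ μ x, 0 ≤ θ μ x := fun μ x => le_max_left _ _
  have hθ1 : ∀ μ x, θ μ x ≤ 1 := by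
    intro μ x
    simp only [hθ_def]
    exact max_le (by norm_num) (min_le_left _ _)
  have hb_cont : ∀ μ, Continuous (b μ) := by
    intro μ
    have hn : Continuous fun x => ‖a μ x - u μ‖ := ((ha_cont μ).sub continuous_const).norm
    have hθc : Continuous (θ μ) := by
      simp only [hθ_def]
      exact continuous_const.max (continuous_const.min ((continuous_const.sub hn).div_const ε))
    simp only [hb_def]
    exact continuous_const.add (hθc.smul ((ha_cont μ).sub continuous_const))
  have hb_sub : ∀ μ x, b μ x - u μ = θ μ x • (a μ x - u μ) := by
    intro μ x
    simp only [hb_def]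
    abel
  have hb_eq : ∀ μ, ∀ x ∈ U μ, b μ x = a μ x := by
    intro μ x hx
    have ht : ‖a μ x - u μ‖ < ε := ha_norm μ x hx
    have hθ : θ μ x = 1 := by
      simp only [hθ_def]
      rw [min_eq_left (by rw [le_div_iff₀ hε0]; linarith), max_eq_right (by norm_num : (0:ℝ) ≤ 1)]
    simp only [hb_def, hθ, one_smul]
    abel
  have hb_norm : ∀ μ x, ‖b μ x - u μ‖ ≤ ε := by
    intro μ x
    rw [hb_sub μ x, norm_smul, Real.norm_of_nonneg (hθ0 μ x)]
    set t := ‖a μ x - u μ‖ with ht_def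
    have ht0 : 0 ≤ t := norm_nonneg _
    rcases le_or_gt t ε with h | h
    · nlinarith [hθ1 μ x, hθ0 μ x]
    · have hθz : θ μ x ≤ max 0 ((2*ε - t)/ε) := by
        simp only [hθ_def]
        exact max_le_max le_rfl (min_le_right _ _)
      rcases le_or_gt ((2*ε - t)/ε) 0 with hz | hz
      · have h0' : θ μ x = 0 := le_antisymm (hθz.trans_eq (max_eq_left hz)) (hθ0 μ x)
        rw [h0', zero_mul]
        exact hε0.le
      · have h2 : θ μ x ≤ (2*ε - t)/ε := hθz.trans_eq (max_eq_right hz.le)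
        refine (mul_le_mul_of_nonneg_right h2 ht0).trans ?_
        rw [div_mul_eq_mul_div, div_le_iff₀ hε0]
        nlinarith [sq_nonneg (t - ε)]
  -- the positive part
  set mm : I → X → A := fun μ x => star (b μ x) * b μ x with hmm_def
  have hmm_cont : ∀ μ, Continuous fun x => mm μ x := fun μ => ((hb_cont μ).star).mul (hb_cont μ)
  have hmm_sa : ∀ μ x, star (mm μ x) = mm μ x := by
    intro μ x
    simp only [hmm_def, star_mul, star_star]
  have hnorm1 : ∀ μ x, ‖1 - mm μ x‖ ≤ 2*‖b μ x - u μ‖ + ‖b μ x - u μ‖^2 := by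
    intro μ x
    have hdecomp : 1 - mm μ x
        = star (u μ) * (u μ - b μ x) + star (u μ - b μ x) * b μ x := by
      simp only [hmm_def, star_sub]
      rw [mul_sub, sub_mul, (huu μ).1]
      abel
    have hbn : ‖b μ x‖ ≤ 1 + ‖b μ x - u μ‖ := by
      calc ‖b μ x‖ = ‖u μ + (b μ x - u μ)‖ := by rw [add_sub_cancel]
      _ ≤ ‖u μ‖ + ‖b μ x - u μ‖ := norm_add_le _ _
      _ = 1 + ‖b μ x - u μ‖ := by rw [CStarRing.norm_of_mem_unitary (hu μ)]
    have e1 : ‖star (u μ) * (u μ - b μ x)‖ = ‖b μ x - u μ‖ := by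
      rw [CStarRing.norm_mem_unitary_mul _ (Unitary.star_mem (hu μ)), norm_sub_rev]
    have e2 : ‖star (u μ - b μ x) * b μ x‖ ≤ ‖b μ x - u μ‖ * ‖b μ x‖ := by
      calc ‖star (u μ - b μ x) * b μ x‖ ≤ ‖star (u μ - b μ x)‖ * ‖b μ x‖ := norm_mul_le _ _
      _ = ‖b μ x - u μ‖ * ‖b μ x‖ := by rw [norm_star, norm_sub_rev]
    calc ‖1 - mm μ x‖ ≤ ‖star (u μ) * (u μ - b μ x)‖ + ‖star (u μ - b μ x) * b μ x‖ := by
          rw [hdecomp]; exact norm_add_le _ _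
    _ ≤ 2*‖b μ x - u μ‖ + ‖b μ x - u μ‖^2 := by
        rw [e1]
        nlinarith [norm_nonneg (b μ x - u μ), e2, hbn,
          mul_le_mul_of_nonneg_left hbn (norm_nonneg (b μ x - u μ))]
  have hmm_small : ∀ μ x, ‖1 - mm μ x‖ ≤ 5⁻¹ := by
    intro μ x
    have h1' := hnorm1 μ x
    have h2' := hb_norm μ x
    have h3' := norm_nonneg (b μ x - u μ)
    nlinarith
  set g : I → X → A := fun μ x => CechGaugeAux.glim (mm μ x) with hg_def
  set ub : I → X → A := fun μ x => b μ x * g μ x with hub_def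
  have hg_cont : ∀ μ, Continuous (g μ) := by
    intro μ
    have hts : Continuous fun x =>
        ∑' n : ℕ, (Polynomial.aeval (mm μ x) (CechGaugeAux.babP (n+1)) - Polynomial.aeval (mm μ x) (CechGaugeAux.babP n)) := by
      refine continuous_tsum (fun n => ?_) (CechGaugeAux.summable_geom5.mul_left 5⁻¹) (fun n x => ?_)
      · exact (((CechGaugeAux.babP (n+1)).continuous_aeval).comp (hmm_cont μ)).sub
          (((CechGaugeAux.babP n).continuous_aeval).comp (hmm_cont μ))
      · refine (CechGaugeAux.bab_diff (hmm_small μ x) n).trans ?_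
        exact mul_le_mul_of_nonneg_right (hmm_small μ x) (by positivity)
    simp only [hg_def, CechGaugeAux.glim]
    exact continuous_const.add hts
  have hgg : ∀ μ x, star (g μ x) = g μ x := fun μ x =>
    CechGaugeAux.glim_selfadjoint (hmm_small μ x) (hmm_sa μ x)
  have hgcomm : ∀ μ x, mm μ x * g μ x = g μ x * mm μ x := fun μ x =>
    CechGaugeAux.glim_commute (hmm_small μ x)
  have hgmul : ∀ μ x, mm μ x * (g μ x * g μ x) = 1 := fun μ x => CechGaugeAux.glim_mul_self (hmm_small μ x)
  have hggm : ∀ μ x, (g μ x * g μ x) * mm μ x = 1 := by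
    intro μ x
    have hc : Commute (mm μ x) (g μ x) := hgcomm μ x
    rw [← (hc.mul_right hc).eq]
    exact hgmul μ x
  have hbU : ∀ μ x, IsUnit (b μ x) := by
    intro μ x
    have hlt : ‖star (u μ) * (u μ - b μ x)‖ < 1 := by
      rw [CStarRing.norm_mem_unitary_mul _ (Unitary.star_mem (hu μ)), norm_sub_rev]
      have := hb_norm μ x
      linarith
    have hfac : b μ x = u μ * (1 - star (u μ) * (u μ - b μ x)) := by
      rw [mul_sub, mul_one, ← mul_assoc, (huu μ).2, one_mul, sub_sub_cancel]
    rw [hfac]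
    exact ((Units.mk (u μ) (star (u μ)) (huu μ).2 (huu μ).1).isUnit).mul
      (Units.oneSub _ hlt).isUnit
  have hub_mem : ∀ μ x, ub μ x ∈ unitary A := by
    intro μ x
    have hA1 : star (ub μ x) * ub μ x = 1 := by
      have hstep : star (ub μ x) * ub μ x = star (g μ x) * (mm μ x * g μ x) := by
        simp only [hub_def, hmm_def, star_mul, mul_assoc]
      rw [hstep, hgg, hgcomm, ← mul_assoc]
      exact hggm μ x
    have hA2 : ub μ x * star (ub μ x) = 1 := by
      have hgb : ub μ x * star (ub μ x) = b μ x * ((g μ x * g μ x) * star (b μ x)) := by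
        simp only [hub_def, star_mul, hgg, mul_assoc]
      have hcancel : (b μ x * ((g μ x * g μ x) * star (b μ x))) * b μ x = 1 * b μ x := by
        rw [one_mul]
        calc b μ x * ((g μ x * g μ x) * star (b μ x)) * b μ x
            = b μ x * ((g μ x * g μ x) * mm μ x) := by simp only [hmm_def, mul_assoc]
        _ = b μ x := by rw [hggm, mul_one]
      rw [hgb]
      exact (hbU μ x).mul_right_cancel hcancel
    exact Unitary.mem_iff.mpr ⟨hA1, hA2⟩
  have hub_norm : ∀ μ, ∀ x ∈ U μ, ‖ub μ x - u μ‖ < ((Fintype.card I:ℝ)^2 + 1) * ε := by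
    intro μ x hx
    have hd : ‖b μ x - u μ‖ < ε := by
      rw [hb_eq μ x hx]
      exact ha_norm μ x hx
    set d := ‖b μ x - u μ‖ with hd_def
    have hd0 : 0 ≤ d := norm_nonneg _
    have hsplit : ub μ x - u μ = b μ x * (g μ x - 1) + (b μ x - u μ) := by
      simp only [hub_def, mul_sub, mul_one]
      abel
    have hbn : ‖b μ x‖ ≤ 1 + d := by
      calc ‖b μ x‖ = ‖u μ + (b μ x - u μ)‖ := by rw [add_sub_cancel]
      _ ≤ ‖u μ‖ + d := norm_add_le _ _
      _ = 1 + d := by rw [CStarRing.norm_of_mem_unitary (hu μ)]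
    have hgn : ‖g μ x - 1‖ ≤ (2*d + d^2) * (5/4) := by
      have hg1 : ‖g μ x - 1‖ ≤ ‖1 - mm μ x‖ * (5/4) := by
        simp only [hg_def]
        exact CechGaugeAux.glim_norm (hmm_small μ x)
      refine hg1.trans ?_
      exact mul_le_mul_of_nonneg_right (hnorm1 μ x) (by norm_num)
    have hchain : ‖ub μ x - u μ‖ ≤ (1+d) * ((2*d + d^2) * (5/4)) + d := by
      calc ‖ub μ x - u μ‖ ≤ ‖b μ x * (g μ x - 1)‖ + d := by
            rw [hsplit]; exact norm_add_le _ _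
      _ ≤ ‖b μ x‖ * ‖g μ x - 1‖ + d := by
            have := norm_mul_le (b μ x) (g μ x - 1)
            linarith
      _ ≤ (1+d) * ((2*d + d^2) * (5/4)) + d := by
            have := mul_le_mul hbn hgn (norm_nonneg _) (by linarith)
            linarith
    refine lt_of_le_of_lt hchain ?_
    have h5e : 5 * ε ≤ ((Fintype.card I:ℝ)^2 + 1) * ε := mul_le_mul_of_nonneg_right hC5 hε0.le
    have hkey : (1+d) * ((2*d + d^2) * (5/4)) + d ≤ 4*d := by nlinarith
    have hd4 : 4*d < 5*ε := by linarith
    linarith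
  have hub_coc : ∀ μ ν, ∀ x ∈ U μ ∩ U ν, ub μ x * v1 μ ν x * star (ub ν x) = v2 μ ν x := by
    intro μ ν x hx
    obtain ⟨hxμ, hxν⟩ := hx
    obtain ⟨hw1, hw2⟩ := Unitary.mem_iff.mp (v1unit μ ν x ⟨hxμ, hxν⟩)
    have hv2nm : star (v2 ν μ x) * v2 ν μ x = 1 := (Unitary.mem_iff.mp (v2unit ν μ x ⟨hxν, hxμ⟩)).1
    have hstar2 : star (v2 ν μ x) = v2 μ ν x := v2star ν μ x ⟨hxν, hxμ⟩
    have hv2inv : v2 ν μ x * v2 μ ν x = 1 := by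
      rw [v2coc ν μ ν x ⟨⟨hxν, hxμ⟩, hxν⟩, v2diag ν x hxν]
    have haν : a ν x = v2 ν μ x * (a μ x * v1 μ ν x) := by
      rw [ha_coc μ ν x ⟨hxμ, hxν⟩, ← mul_assoc, hv2inv, one_mul]
    have hbν : b ν x = v2 ν μ x * (b μ x * v1 μ ν x) := by
      rw [hb_eq ν x hxν, hb_eq μ x hxμ]
      exact haν
    have hmν : mm ν x = star (v1 μ ν x) * mm μ x * v1 μ ν x := by
      simp only [hmm_def]
      rw [hbν, star_mul]
      simp only [mul_assoc]
      rw [show star (v2 ν μ x) * (v2 ν μ x * (b μ x * v1 μ ν x)) = b μ x * v1 μ ν x from by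
        rw [← mul_assoc, hv2nm, one_mul]]
      simp only [star_mul, mul_assoc]
    have hsmall' : ‖1 - star (v1 μ ν x) * mm μ x * v1 μ ν x‖ ≤ 5⁻¹ := by
      rw [← hmν]
      exact hmm_small ν x
    have hgν : g ν x = star (v1 μ ν x) * g μ x * v1 μ ν x := by
      simp only [hg_def]
      rw [hmν]
      exact CechGaugeAux.glim_conj hw1 hw2 (hmm_small μ x) hsmall'
    have hubν : ub ν x = v2 ν μ x * (ub μ x * v1 μ ν x) := by
      simp only [hub_def]
      rw [hbν, hgν]
      simp only [mul_assoc]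
      rw [show v1 μ ν x * (star (v1 μ ν x) * (g μ x * v1 μ ν x)) = g μ x * v1 μ ν x from by
        rw [← mul_assoc, hw2, one_mul]]
    have hubμs : ub μ x * star (ub μ x) = 1 := (Unitary.mem_iff.mp (hub_mem μ x)).2
    rw [hubν, star_mul, star_mul, hstar2]
    simp only [star_mul, mul_assoc]
    rw [show v1 μ ν x * (star (v1 μ ν x) * (star (ub μ x) * v2 μ ν x))
        = star (ub μ x) * v2 μ ν x from by rw [← mul_assoc, hw2, one_mul]]
    rw [← mul_assoc, hubμs, one_mul]
  refine ⟨ub, ?_, fun μ x hx => ⟨hub_mem μ x, hub_norm μ x hx⟩, hub_coc⟩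
  intro μ
  simp only [hub_def]
  exact (hb_cont μ).mul (hg_cont μ)
end

section
/- Let X be a topological space, I a finite index set with |I| elements, (U_μ)_{μ∈I} an open cover of X, A a unital C*-algebra, and set C₁ := |I|² + 1. Let v¹ and v² be two unitary Čech 1-cocycles subordinate to the cover, let (u_μ)_{μ∈I} be unitaries in A, and assume 0 < ε < 1/(3·C₁). Suppose ū = (ū_μ)_{μ∈I} and ū' = (ū'_μ)_{μ∈I} are two families of continuous maps X → A such that for each of them: ū_μ(x) is unitary and ‖ū_μ(x) − u_μ‖ < C₁·ε for all x ∈ U_μ, and ū_μ(x)·v¹_{μν}(x)·ū_ν(x)* = v²_{μν}(x) for all x ∈ U_μ ∩ U_ν (and similarly for ū'). Then there exists a family of continuous maps H_μ : X × [0,1] → A such that H_μ(x,0) = ū_μ(x) and H_μ(x,1) = ū'_μ(x) for all x, and for every t ∈ [0,1]: H_μ(x,t) is unitary and ‖H_μ(x,t) − u_μ‖ < 3·C₁·ε for all x ∈ U_μ, and H_μ(x,t)·v¹_{μν}(x)·H_ν(x,t)* = v²_{μν}(x) for all x ∈ U_μ ∩ U_ν. -/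
section GaugeAux

variable {A : Type*} [CStarAlgebra A]

lemma gauge_two_smul_one : ((2:ℝ) • (1:A)) = 2 := by
  rw [two_smul, one_add_one_eq_two]

lemma gauge_half_smul_two : ((2⁻¹:ℝ) • (2:A)) = 1 := by
  rw [← gauge_two_smul_one, smul_smul]; norm_num

lemma gauge_isUnit_two_add (a : A) (ha : ‖a‖ < 2) : IsUnit ((2:A) + a) := by
  have h1 : ‖-((2⁻¹:ℝ) • a)‖ < 1 := by
    rw [norm_neg, norm_smul]
    have : ‖(2⁻¹:ℝ)‖ = 2⁻¹ := by rw [Real.norm_eq_abs]; norm_num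
    rw [this]
    nlinarith [norm_nonneg a]
  have hu2 : IsUnit (2:A) := by
    refine ⟨⟨2, (2⁻¹:ℝ) • 1, ?_, ?_⟩, rfl⟩
    · rw [mul_smul_comm, mul_one, gauge_half_smul_two]
    · rw [smul_mul_assoc, one_mul, gauge_half_smul_two]
  have key : (2:A) + a = 2 * (1 - -((2⁻¹:ℝ) • a)) := by
    rw [sub_neg_eq_add, mul_add, mul_one, mul_smul_comm, two_mul, smul_add, ← add_smul]
    norm_num
  rw [key]
  exact hu2.mul (Units.oneSub _ h1).isUnit

lemma gauge_norm_inverse_two_add (a : A) (ha : ‖a‖ < 2) :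
    ‖Ring.inverse ((2:A) + a)‖ ≤ (2 - ‖a‖)⁻¹ := by
  have hu := gauge_isUnit_two_add a ha
  set j := Ring.inverse ((2:A) + a) with hj
  have h1 : (2:A) * j + a * j = 1 := by
    rw [← add_mul, Ring.mul_inverse_cancel _ hu]
  have h2 : (2:ℝ) • j = 1 - a * j := by
    rw [two_smul, ← two_mul, eq_sub_iff_add_eq, h1]
  have hn1 : ‖(1:A)‖ ≤ 1 := by
    have := CStarRing.norm_star_mul_self (x := (1:A))
    rw [star_one, one_mul] at this
    nlinarith [norm_nonneg (1:A)]
  have h3 : 2 * ‖j‖ ≤ 1 + ‖a‖ * ‖j‖ := by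
    have h4 : ‖(2:ℝ) • j‖ ≤ ‖(1:A)‖ + ‖a * j‖ := h2 ▸ norm_sub_le _ _
    rw [norm_smul, Real.norm_ofNat] at h4
    calc 2 * ‖j‖ ≤ ‖(1:A)‖ + ‖a * j‖ := h4
      _ ≤ 1 + ‖a‖ * ‖j‖ := add_le_add hn1 (norm_mul_le _ _)
  rw [inv_eq_one_div, le_div_iff₀ (by linarith)]
  nlinarith [norm_nonneg j]

lemma gauge_quad (h hs : A) (hrel : hs * h = -(h + hs)) (c : ℝ) :
    ((2:A) + c•hs) * (2 + c•h) = (4:A) + (2*c - c*c)•h + (2*c - c*c)•hs := by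
  have e2 : (2:A) = 1+1 := by norm_num
  have e4 : (4:A) = 1+1+(1+1) := by norm_num
  rw [e2, e4]
  simp only [mul_add, add_mul, smul_mul_assoc, mul_smul_comm, smul_smul, hrel, smul_add, smul_neg,
    one_mul, mul_one]
  module

end GaugeAux

section GaugeCore

variable {A : Type*} [CStarAlgebra A]

lemma gauge_inverse_intertwine (z1 z2 v : A) (h1 : IsUnit z1) (h2 : IsUnit z2)
    (hcomm : z1 * v = v * z2) : Ring.inverse z1 * v = v * Ring.inverse z2 := by
  calc Ring.inverse z1 * v = Ring.inverse z1 * v * (z2 * Ring.inverse z2) := by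
        rw [Ring.mul_inverse_cancel _ h2, mul_one]
    _ = Ring.inverse z1 * (v * z2) * Ring.inverse z2 := by simp only [mul_assoc]
    _ = Ring.inverse z1 * (z1 * v) * Ring.inverse z2 := by rw [hcomm]
    _ = Ring.inverse z1 * z1 * v * Ring.inverse z2 := by simp only [mul_assoc]
    _ = v * Ring.inverse z2 := by rw [Ring.inverse_mul_cancel _ h1, one_mul]

lemma gauge_omega_spec (w : A) (hw : w ∈ unitary A) (hn : ‖w - 1‖ < 2/3)
    (t : ℝ) (ht0 : 0 ≤ t) (ht1 : t ≤ 1) :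
    IsUnit ((2:A) + (1-t)•(w-1)) ∧
    (((2:A) + (1+t)•(w-1)) * Ring.inverse ((2:A) + (1-t)•(w-1)) ∈ unitary A) ∧
    ‖((2:A) + (1+t)•(w-1)) * Ring.inverse ((2:A) + (1-t)•(w-1)) - 1‖ ≤ ‖w - 1‖ := by
  obtain ⟨hw1, hw2⟩ := Unitary.mem_iff.mp hw
  set h : A := w - 1 with hdef
  set hs : A := star w - 1 with hsdef
  have hsh : star h = hs := by rw [hdef, hsdef, star_sub, star_one]
  have rel1 : hs * h = -(h + hs) := by
    rw [hdef, hsdef]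
    simp only [sub_mul, mul_sub, hw1, one_mul, mul_one]
    abel
  have rel2 : h * hs = -(hs + h) := by
    rw [hdef, hsdef]
    simp only [sub_mul, mul_sub, hw2, one_mul, mul_one]
    abel
  have hd : ‖h‖ < 2/3 := hn
  have hds : ‖hs‖ = ‖h‖ := by rw [← hsh, norm_star]
  have hd0 : 0 ≤ ‖h‖ := norm_nonneg h
  set z : A := 2 + (1-t)•h with zdef
  set b : A := 2 + (1+t)•h with bdef
  have hnz : ‖(1-t)•h‖ = (1-t)*‖h‖ := by
    rw [norm_smul, Real.norm_eq_abs, abs_of_nonneg (by linarith)]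
  have hnb : ‖(1+t)•h‖ = (1+t)*‖h‖ := by
    rw [norm_smul, Real.norm_eq_abs, abs_of_nonneg (by linarith)]
  have hz : IsUnit z := gauge_isUnit_two_add _ (by rw [hnz]; nlinarith)
  have hb : IsUnit b := gauge_isUnit_two_add _ (by rw [hnb]; nlinarith)
  have hsz : star z = 2 + (1-t)•hs := by
    rw [zdef, star_add, star_smul, hsh]
    norm_num
  have hsb : star b = 2 + (1+t)•hs := by
    rw [bdef, star_add, star_smul, hsh]
    norm_num
  have key1 : star z * z = star b * b := by
    rw [hsz, hsb, zdef, bdef, gauge_quad h hs rel1 (1-t), gauge_quad h hs rel1 (1+t)]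
    have e : 2*(1-t) - (1-t)*(1-t) = 2*(1+t) - (1+t)*(1+t) ∨ True := Or.inr trivial
    have e1 : (2*(1-t) - (1-t)*(1-t) : ℝ) = 1 - t*t := by ring
    have e2 : (2*(1+t) - (1+t)*(1+t) : ℝ) = 1 - t*t := by ring
    rw [e1, e2]
  have hszu : IsUnit (star z) := hz.star
  set ω : A := b * Ring.inverse z with ωdef
  have left : star ω * ω = 1 := by
    rw [ωdef, star_mul, ← Ring.inverse_star]
    calc Ring.inverse (star z) * star b * (b * Ring.inverse z)
        = Ring.inverse (star z) * (star b * b) * Ring.inverse z := by simp only [mul_assoc]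
      _ = Ring.inverse (star z) * (star z * z) * Ring.inverse z := by rw [← key1]
      _ = Ring.inverse (star z) * star z * (z * Ring.inverse z) := by simp only [mul_assoc]
      _ = 1 := by rw [Ring.inverse_mul_cancel _ hszu, Ring.mul_inverse_cancel _ hz, one_mul]
  have hωu : IsUnit ω := hb.mul hz.ringInverse
  have right : ω * star ω = 1 := by
    obtain ⟨U, hU⟩ := hωu
    have hh : star ω * ↑U = 1 := by rw [hU]; exact left
    have := Units.inv_eq_of_mul_eq_one_left hh
    rw [← this, ← hU, Units.mul_inv]
  refine ⟨hz, Unitary.mem_iff.mpr ⟨left, right⟩, ?_⟩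
  have hbz : b - z = (2*t)•h := by
    rw [bdef, zdef, add_sub_add_left_eq_sub, ← sub_smul]
    congr 1
    ring
  have hω1 : ω - 1 = ((2*t)•h) * Ring.inverse z := by
    rw [← hbz, sub_mul, ωdef, Ring.mul_inverse_cancel _ hz]
  have hinv : ‖Ring.inverse z‖ ≤ (2 - (1-t)*‖h‖)⁻¹ := by
    have := gauge_norm_inverse_two_add ((1-t)•h) (by rw [hnz]; nlinarith)
    rwa [hnz] at this
  have hpos : 0 < 2 - (1-t)*‖h‖ := by nlinarith
  calc ‖ω - 1‖ = ‖((2*t)•h) * Ring.inverse z‖ := by rw [hω1]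
    _ ≤ ‖(2*t)•h‖ * ‖Ring.inverse z‖ := norm_mul_le _ _
    _ = (2*t) * ‖h‖ * ‖Ring.inverse z‖ := by
        rw [norm_smul, Real.norm_eq_abs, abs_of_nonneg (by linarith)]
    _ ≤ (2*t) * ‖h‖ * (2 - (1-t)*‖h‖)⁻¹ := by
        apply mul_le_mul_of_nonneg_left hinv (by nlinarith)
    _ ≤ ‖h‖ := by
        rw [← div_eq_mul_inv, div_le_iff₀ hpos]
        nlinarith [mul_nonneg (mul_nonneg hd0 (by linarith : (0:ℝ) ≤ 1 - t))
          (by linarith : (0:ℝ) ≤ 2 - ‖h‖)]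

end GaugeCore

lemma gauge_inverse_two {A : Type*} [CStarAlgebra A] : Ring.inverse ((2:A)) = (2⁻¹:ℝ) • 1 := by
  have : Ring.inverse ((⟨2, (2⁻¹:ℝ) • 1,
      by rw [mul_smul_comm, mul_one, gauge_half_smul_two],
      by rw [smul_mul_assoc, one_mul, gauge_half_smul_two]⟩ : Aˣ) : A) = (2⁻¹:ℝ) • 1 :=
    Ring.inverse_unit _
  exact this


/-- path-connectedness part of Lemma `lem:gauge`(2): any two exact gauge
transformations in `G_{C₁ε}(u)` (with `C₁ = |I|² + 1` and `0 < ε < 1/(3C₁)`) are joined by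
a path of exact gauge transformations inside `G_{3C₁ε}(u)`. -/
theorem gauge_transformations_homotopic
    {X I A : Type*} [TopologicalSpace X] [Fintype I] [CStarAlgebra A]
    (U : I → Set X) (hopen : ∀ μ, IsOpen (U μ)) (hcover : ∀ x, ∃ μ, x ∈ U μ)
    (C₁ : ℝ) (hC₁ : C₁ = (Fintype.card I : ℝ) ^ 2 + 1)
    (v1 v2 : I → I → X → A)
    (h1 : IsUnitaryCechCocycle U v1) (h2 : IsUnitaryCechCocycle U v2)
    (u : I → A) (hu : ∀ μ, u μ ∈ unitary A)
    (ε : ℝ) (hε0 : 0 < ε) (hε : ε < 1 / (3 * C₁))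
    (ub ub' : I → X → A)
    (hub_cont : ∀ μ, Continuous (ub μ)) (hub'_cont : ∀ μ, Continuous (ub' μ))
    (hub_unit : ∀ μ, ∀ x ∈ U μ, ub μ x ∈ unitary A ∧ ‖ub μ x - u μ‖ < C₁ * ε)
    (hub'_unit : ∀ μ, ∀ x ∈ U μ, ub' μ x ∈ unitary A ∧ ‖ub' μ x - u μ‖ < C₁ * ε)
    (hub_gauge : ∀ μ ν, ∀ x ∈ U μ ∩ U ν, ub μ x * v1 μ ν x * star (ub ν x) = v2 μ ν x)
    (hub'_gauge : ∀ μ ν, ∀ x ∈ U μ ∩ U ν, ub' μ x * v1 μ ν x * star (ub' ν x) = v2 μ ν x) :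
    ∃ H : I → X → ℝ → A,
      (∀ μ, ContinuousOn (fun q : X × ℝ => H μ q.1 q.2) (Set.univ ×ˢ Set.Icc 0 1)) ∧
      (∀ μ x, H μ x 0 = ub μ x ∧ H μ x 1 = ub' μ x) ∧
      (∀ t ∈ Set.Icc (0 : ℝ) 1,
        (∀ μ, ∀ x ∈ U μ, H μ x t ∈ unitary A ∧ ‖H μ x t - u μ‖ < 3 * C₁ * ε) ∧
        (∀ μ ν, ∀ x ∈ U μ ∩ U ν, H μ x t * v1 μ ν x * star (H ν x t) = v2 μ ν x)) := by
  classical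
  have hC1pos : (0:ℝ) < C₁ := by
    rw [hC₁]; positivity
  have h3C : (0:ℝ) < 3 * C₁ := by linarith
  have hCε : C₁ * ε < 1/3 := by
    rw [lt_div_iff₀ h3C] at hε
    nlinarith
  have hCε0 : 0 < C₁ * ε := mul_pos hC1pos hε0
  set hm : I → X → A := fun μ x => (ub' μ x - ub μ x) * star (ub μ x) with hhm
  set lam : I → X → ℝ := fun μ x => (2/3) / max (2/3) ‖hm μ x‖ with hlam
  set Z : I → X → ℝ → A := fun μ x t => (2:A) + ((1-t) * lam μ x) • hm μ x with hZdef
  -- basic facts about lam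
  have hmax_pos : ∀ μ x, (0:ℝ) < max (2/3) ‖hm μ x‖ :=
    fun μ x => lt_of_lt_of_le (by norm_num) (le_max_left _ _)
  have hlam_pos : ∀ μ x, 0 < lam μ x := fun μ x => div_pos (by norm_num) (hmax_pos μ x)
  have hsc : ∀ μ x, lam μ x * ‖hm μ x‖ ≤ 2/3 := by
    intro μ x
    have h1 : ‖hm μ x‖ ≤ max (2/3) ‖hm μ x‖ := le_max_right _ _
    have h2 : (0:ℝ) ≤ (2/3) / max (2/3) ‖hm μ x‖ := le_of_lt (hlam_pos μ x)
    calc lam μ x * ‖hm μ x‖ ≤ lam μ x * max (2/3) ‖hm μ x‖ := mul_le_mul_of_nonneg_left h1 h2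
      _ = 2/3 := div_mul_cancel₀ _ (ne_of_gt (hmax_pos μ x))
  have hZnorm : ∀ μ x, ∀ t : ℝ, 0 ≤ t → t ≤ 1 → ‖((1-t) * lam μ x) • hm μ x‖ < 2 := by
    intro μ x t ht0 ht1
    rw [norm_smul, Real.norm_eq_abs, abs_mul, abs_of_nonneg (le_of_lt (hlam_pos μ x)),
      abs_of_nonneg (by linarith : (0:ℝ) ≤ 1 - t), mul_assoc]
    have h1 : lam μ x * ‖hm μ x‖ ≤ 2/3 := hsc μ x
    have h2 : (0:ℝ) ≤ lam μ x * ‖hm μ x‖ :=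
      mul_nonneg (le_of_lt (hlam_pos μ x)) (norm_nonneg _)
    nlinarith
  have hZunit : ∀ μ x, ∀ t : ℝ, 0 ≤ t → t ≤ 1 → IsUnit (Z μ x t) :=
    fun μ x t ht0 ht1 => gauge_isUnit_two_add _ (hZnorm μ x t ht0 ht1)
  refine ⟨fun μ x t => ub μ x + (2*t) • (Ring.inverse (Z μ x t) * (ub' μ x - ub μ x)),
    ?_, ?_, ?_⟩
  · -- continuity
    intro μ
    intro q hq
    have hq2 : q.2 ∈ Set.Icc (0:ℝ) 1 := hq.2
    apply ContinuousAt.continuousWithinAt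
    have ck : Continuous (fun q : X × ℝ => ub' μ q.1 - ub μ q.1) :=
      ((hub'_cont μ).comp continuous_fst).sub ((hub_cont μ).comp continuous_fst)
    have chm : Continuous (fun q : X × ℝ => hm μ q.1) :=
      ck.mul ((hub_cont μ).comp continuous_fst).star
    have clam : Continuous (fun q : X × ℝ => lam μ q.1) := by
      apply continuous_const.div (continuous_const.max chm.norm)
      exact fun q => ne_of_gt (hmax_pos μ q.1)
    have cZ : Continuous (fun q : X × ℝ => Z μ q.1 q.2) :=
      continuous_const.add (((continuous_const.sub continuous_snd).mul clam).smul chm)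
    have hcAt : ContinuousAt (fun q : X × ℝ => Ring.inverse (Z μ q.1 q.2)) q := by
      obtain ⟨Uz, hUz⟩ := hZunit μ q.1 q.2 hq2.1 hq2.2
      have h1 : ContinuousAt Ring.inverse (Z μ q.1 q.2) := by
        rw [← hUz]; exact NormedRing.inverse_continuousAt Uz
      exact ContinuousAt.comp (x := q) h1 cZ.continuousAt
    exact (((hub_cont μ).comp continuous_fst).continuousAt).add
      (((continuous_const.mul continuous_snd).continuousAt).smul (hcAt.mul ck.continuousAt))
  · -- endpoints
    intro μ x
    constructor
    · simp
    · have hZ1 : Z μ x 1 = 2 := by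
        show (2:A) + ((1-(1:ℝ)) * lam μ x) • hm μ x = 2
        norm_num
      show ub μ x + ((2:ℝ)*1) • (Ring.inverse (Z μ x 1) * (ub' μ x - ub μ x)) = ub' μ x
      rw [hZ1, gauge_inverse_two, smul_mul_assoc, one_mul, smul_smul]
      norm_num
  · -- main properties at each t
    intro t ht
    set ωf : I → X → A := fun μ x =>
      ((2:A) + (1+t) • hm μ x) * Ring.inverse ((2:A) + (1-t) • hm μ x) with hωf
    have main : ∀ μ x, x ∈ U μ →
        (hm μ x = ub' μ x * star (ub μ x) - 1) ∧
        ‖hm μ x‖ < 2*(C₁*ε) ∧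
        IsUnit ((2:A) + (1-t) • hm μ x) ∧
        (ωf μ x ∈ unitary A) ∧
        ‖ωf μ x - 1‖ ≤ ‖hm μ x‖ ∧
        (ub μ x + (2*t) • (Ring.inverse (Z μ x t) * (ub' μ x - ub μ x)) = ωf μ x * ub μ x) := by
      intro μ x hx
      obtain ⟨hubx, hubn⟩ := hub_unit μ x hx
      obtain ⟨hub'x, hub'n⟩ := hub'_unit μ x hx
      obtain ⟨hubx1, hubx2⟩ := Unitary.mem_iff.mp hubx
      have hust : star (ub μ x) ∈ unitary A := Unitary.star_mem hubx
      have hmeq : hm μ x = ub' μ x * star (ub μ x) - 1 := by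
        show (ub' μ x - ub μ x) * star (ub μ x) = ub' μ x * star (ub μ x) - 1
        rw [sub_mul, hubx2]
      have hknorm : ‖ub' μ x - ub μ x‖ < 2*(C₁*ε) := by
        have h1 : ub' μ x - ub μ x = (ub' μ x - u μ) + (u μ - ub μ x) := by abel
        calc ‖ub' μ x - ub μ x‖ ≤ ‖ub' μ x - u μ‖ + ‖u μ - ub μ x‖ := by
              rw [h1]; exact norm_add_le _ _
          _ = ‖ub' μ x - u μ‖ + ‖ub μ x - u μ‖ := by rw [norm_sub_rev (u μ)]
          _ < 2*(C₁*ε) := by linarith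
      have hmnorm : ‖hm μ x‖ < 2*(C₁*ε) := by
        show ‖(ub' μ x - ub μ x) * star (ub μ x)‖ < 2*(C₁*ε)
        rw [CStarRing.norm_mul_mem_unitary _ hust]
        exact hknorm
      have hm23 : ‖hm μ x‖ < 2/3 := by linarith
      have hlam1 : lam μ x = 1 := by
        show (2/3) / max (2/3) ‖hm μ x‖ = 1
        rw [max_eq_left (le_of_lt hm23)]
        norm_num
      have hZx : Z μ x t = (2:A) + (1-t) • hm μ x := by
        show (2:A) + ((1-t) * lam μ x) • hm μ x = _
        rw [hlam1, mul_one]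
      set w : A := ub' μ x * star (ub μ x) with hw
      have hwu : w ∈ unitary A := mul_mem hub'x hust
      have hw1 : w - 1 = hm μ x := hmeq.symm
      have hwn : ‖w - 1‖ < 2/3 := by rw [hw1]; exact hm23
      have spec := gauge_omega_spec w hwu hwn t ht.1 ht.2
      rw [hw1] at spec
      obtain ⟨hzU, hωmem, hωn⟩ := spec
      refine ⟨hmeq, hmnorm, hzU, hωmem, hωn, ?_⟩
      -- H = ωf * ub
      have hb_split : (2:A) + (1+t) • hm μ x
          = ((2:A) + (1-t) • hm μ x) + (2*t) • hm μ x := by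
        have e : (1+t : ℝ) = (1-t) + 2*t := by ring
        rw [e, add_smul, add_assoc]
      have hcommZ : ((2:A) + (1-t) • hm μ x) * hm μ x
          = hm μ x * ((2:A) + (1-t) • hm μ x) := by
        rw [add_mul, mul_add, smul_mul_assoc, mul_smul_comm, two_mul, mul_two]
      have hinvcomm : Ring.inverse ((2:A) + (1-t) • hm μ x) * hm μ x
          = hm μ x * Ring.inverse ((2:A) + (1-t) • hm μ x) :=
        gauge_inverse_intertwine _ _ _ hzU hzU hcommZ
      have hm_mul_ub : hm μ x * ub μ x = ub' μ x - ub μ x := by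
        show (ub' μ x - ub μ x) * star (ub μ x) * ub μ x = _
        rw [mul_assoc, hubx1, mul_one]
      have hωeq : ωf μ x = ((2:A) + (1-t) • hm μ x) * Ring.inverse ((2:A) + (1-t) • hm μ x)
          + (2*t) • (hm μ x * Ring.inverse ((2:A) + (1-t) • hm μ x)) := by
        show ((2:A) + (1+t) • hm μ x) * Ring.inverse ((2:A) + (1-t) • hm μ x) = _
        rw [hb_split, add_mul, smul_mul_assoc]
      rw [hZx]
      calc ub μ x + (2*t) • (Ring.inverse ((2:A) + (1-t) • hm μ x) * (ub' μ x - ub μ x))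
          = ub μ x + (2*t) • (Ring.inverse ((2:A) + (1-t) • hm μ x) * (hm μ x * ub μ x)) := by
            rw [hm_mul_ub]
        _ = ub μ x + (2*t) • (hm μ x * Ring.inverse ((2:A) + (1-t) • hm μ x) * ub μ x) := by
            rw [← mul_assoc, hinvcomm]
        _ = (1 + (2*t) • (hm μ x * Ring.inverse ((2:A) + (1-t) • hm μ x))) * ub μ x := by
            rw [add_mul, one_mul, smul_mul_assoc]
        _ = (((2:A) + (1-t) • hm μ x) * Ring.inverse ((2:A) + (1-t) • hm μ x)
              + (2*t) • (hm μ x * Ring.inverse ((2:A) + (1-t) • hm μ x))) * ub μ x := by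
            rw [Ring.mul_inverse_cancel _ hzU]
        _ = ωf μ x * ub μ x := by rw [hωeq]
    constructor
    · -- unitarity and norm
      intro μ x hx
      obtain ⟨hmeq, hmnorm, hzU, hωmem, hωn, hHeq⟩ := main μ x hx
      obtain ⟨hubx, hubn⟩ := hub_unit μ x hx
      beta_reduce
      constructor
      · rw [hHeq]
        exact mul_mem hωmem hubx
      · have hsplit : ωf μ x * ub μ x - u μ = (ωf μ x - 1) * ub μ x + (ub μ x - u μ) := by
          rw [sub_mul, one_mul]; abel
        calc ‖ub μ x + (2*t) • (Ring.inverse (Z μ x t) * (ub' μ x - ub μ x)) - u μ‖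
            = ‖(ωf μ x - 1) * ub μ x + (ub μ x - u μ)‖ := by rw [hHeq, hsplit]
          _ ≤ ‖(ωf μ x - 1) * ub μ x‖ + ‖ub μ x - u μ‖ := norm_add_le _ _
          _ = ‖ωf μ x - 1‖ + ‖ub μ x - u μ‖ := by
              rw [CStarRing.norm_mul_mem_unitary _ hubx]
          _ < 3 * C₁ * ε := by
              have := le_trans hωn (le_of_lt hmnorm)
              nlinarith
    · -- gauge condition
      intro μ ν x hx
      beta_reduce
      obtain ⟨hmeqμ, _, hzUμ, hωmemμ, _, hHeqμ⟩ := main μ x hx.1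
      obtain ⟨hmeqν, _, hzUν, hωmemν, _, hHeqν⟩ := main ν x hx.2
      obtain ⟨hubμ1, hubμ2⟩ := Unitary.mem_iff.mp (hub_unit μ x hx.1).1
      obtain ⟨hubν1, hubν2⟩ := Unitary.mem_iff.mp (hub_unit ν x hx.2).1
      obtain ⟨hubν'1, hubν'2⟩ := Unitary.mem_iff.mp (hub'_unit ν x hx.2).1
      have e1 : star (ub μ x) * v2 μ ν x = v1 μ ν x * star (ub ν x) := by
        rw [← hub_gauge μ ν x hx, ← mul_assoc, ← mul_assoc, hubμ1, one_mul]
      have e2 : ub' μ x * v1 μ ν x = v2 μ ν x * ub' ν x := by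
        calc ub' μ x * v1 μ ν x
            = ub' μ x * v1 μ ν x * (star (ub' ν x) * ub' ν x) := by rw [hubν'1, mul_one]
          _ = (ub' μ x * v1 μ ν x * star (ub' ν x)) * ub' ν x := by simp only [mul_assoc]
          _ = v2 μ ν x * ub' ν x := by rw [hub'_gauge μ ν x hx]
      have ecomm : hm μ x * v2 μ ν x = v2 μ ν x * hm ν x := by
        rw [hmeqμ, hmeqν, sub_mul, mul_sub, one_mul, mul_one]
        congr 1
        calc ub' μ x * star (ub μ x) * v2 μ ν x
            = ub' μ x * (star (ub μ x) * v2 μ ν x) := by rw [mul_assoc]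
          _ = ub' μ x * (v1 μ ν x * star (ub ν x)) := by rw [e1]
          _ = (ub' μ x * v1 μ ν x) * star (ub ν x) := by rw [mul_assoc]
          _ = (v2 μ ν x * ub' ν x) * star (ub ν x) := by rw [e2]
          _ = v2 μ ν x * (ub' ν x * star (ub ν x)) := by rw [mul_assoc]
      have smul_comm_fact : ∀ c : ℝ, ((2:A) + c • hm μ x) * v2 μ ν x
          = v2 μ ν x * ((2:A) + c • hm ν x) := by
        intro c
        rw [add_mul, mul_add, smul_mul_assoc, mul_smul_comm, two_mul, mul_two, ecomm]
      have invcomm : Ring.inverse ((2:A) + (1-t) • hm μ x) * v2 μ ν x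
          = v2 μ ν x * Ring.inverse ((2:A) + (1-t) • hm ν x) :=
        gauge_inverse_intertwine _ _ _ hzUμ hzUν (smul_comm_fact (1-t))
      have ωcomm : ωf μ x * v2 μ ν x = v2 μ ν x * ωf ν x := by
        rw [hωf]
        calc ((2:A) + (1+t) • hm μ x) * Ring.inverse ((2:A) + (1-t) • hm μ x) * v2 μ ν x
            = ((2:A) + (1+t) • hm μ x) * (Ring.inverse ((2:A) + (1-t) • hm μ x) * v2 μ ν x) := by
              rw [mul_assoc]
          _ = ((2:A) + (1+t) • hm μ x) * (v2 μ ν x * Ring.inverse ((2:A) + (1-t) • hm ν x)) := by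
              rw [invcomm]
          _ = (((2:A) + (1+t) • hm μ x) * v2 μ ν x) * Ring.inverse ((2:A) + (1-t) • hm ν x) := by
              rw [mul_assoc]
          _ = (v2 μ ν x * ((2:A) + (1+t) • hm ν x)) * Ring.inverse ((2:A) + (1-t) • hm ν x) := by
              rw [smul_comm_fact (1+t)]
          _ = v2 μ ν x * ωf ν x := by rw [mul_assoc]
      obtain ⟨hων1, hων2⟩ := Unitary.mem_iff.mp hωmemν
      calc (ub μ x + (2*t) • (Ring.inverse (Z μ x t) * (ub' μ x - ub μ x))) * v1 μ ν x
            * star (ub ν x + (2*t) • (Ring.inverse (Z ν x t) * (ub' ν x - ub ν x)))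
          = (ωf μ x * ub μ x) * v1 μ ν x * star (ωf ν x * ub ν x) := by rw [hHeqμ, hHeqν]
        _ = ωf μ x * (ub μ x * v1 μ ν x * star (ub ν x)) * star (ωf ν x) := by
            rw [star_mul]; simp only [mul_assoc]
        _ = ωf μ x * v2 μ ν x * star (ωf ν x) := by rw [hub_gauge μ ν x hx]
        _ = v2 μ ν x * (ωf ν x * star (ωf ν x)) := by rw [ωcomm, mul_assoc]
        _ = v2 μ ν x := by rw [hων2, mul_one]
end

section
/- Let X be a topological space, I a finite index set, (U_μ)_{μ∈I} an open cover of X, and A a unital C*-algebra. Let G be the simple graph on vertex set I in which distinct μ, ν are adjacent if and only if U_μ ∩ U_ν ≠ ∅; assume G is connected and let T be a spanning tree of G. Then for every ε > 0 and every (ε,U)-flat unitary Čech 1-cocycle v = (v_{μν}) subordinate to the cover, there exist unitaries (u_μ)_{μ∈I} in A such that for every edge {μ,ν} of T and every x ∈ U_μ ∩ U_ν one has ‖ u_μ·v_{μν}(x)·u_ν* − 1 ‖ < ε. -/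
/-- `(ε, U)`-flatness of a Čech 1-cocycle: oscillation less than `ε` on every overlap. -/
def IsFlatCocycle {X I A : Type*} [TopologicalSpace X] [NormedRing A]
    (ε : ℝ) (U : I → Set X) (v : I → I → X → A) : Prop :=
  ∀ μ ν, ∀ x ∈ U μ ∩ U ν, ∀ y ∈ U μ ∩ U ν, ‖v μ ν x - v μ ν y‖ < ε

/-- essential content of Lemma `lem:normalized`: if `G` is the
1-skeleton of the nerve of a finite open cover (assumed connected) and `T` is a spanning
tree of `G`, then every `(ε, U)`-flat unitary Čech cocycle is unitarily equivalent to one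
which is ε-close to `1` on all edges of `T`. -/
theorem normalize_flat_cocycle_on_spanning_tree
    {X I A : Type*} [TopologicalSpace X] [Finite I] [CStarAlgebra A]
    (U : I → Set X) (hopen : ∀ μ, IsOpen (U μ)) (hcover : ∀ x, ∃ μ, x ∈ U μ)
    (G : SimpleGraph I) (hG : ∀ μ ν, G.Adj μ ν ↔ μ ≠ ν ∧ (U μ ∩ U ν).Nonempty)
    (hconn : G.Connected)
    (T : SimpleGraph I) (hTG : T ≤ G) (hT : T.IsTree)
    (ε : ℝ) (hε : 0 < ε)
    (v : I → I → X → A) (hv : IsUnitaryCechCocycle U v) (hflat : IsFlatCocycle ε U v) :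
    ∃ u : I → A, (∀ μ, u μ ∈ unitary A) ∧
      ∀ μ ν, T.Adj μ ν → ∀ x ∈ U μ ∩ U ν,
        ‖u μ * v μ ν x * star (u ν) - 1‖ < ε := by

  classical
  obtain ⟨r⟩ : Nonempty I := hT.isConnected.nonempty
  choose p hp using fun μ => (hT.existsUnique_path r μ).exists
  have huniq : ∀ {a b : I} (w w' : T.Walk a b), w.IsPath → w'.IsPath → w = w' := by
    intro a b w w' h h'
    exact ((hT.existsUnique_path a b).unique h h')
  -- choose a value of the cocycle on each (possibly empty) overlap
  set v' : I → I → A := fun μ ν =>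
    if h : (U μ ∩ U ν).Nonempty then v μ ν h.some else 1 with hv'def
  have hv'mem : ∀ μ ν, v' μ ν ∈ unitary A := by
    intro μ ν
    simp only [hv'def]
    split
    · exact hv.2.1 μ ν _ (Set.Nonempty.some_mem ‹_›)
    · exact one_mem _
  set u : I → A := fun μ => ((p μ).darts.map fun d => v' d.fst d.snd).prod with hudef
  have humem : ∀ μ, u μ ∈ unitary A := by
    intro μ
    apply Submonoid.list_prod_mem
    intro a ha
    obtain ⟨d, _, rfl⟩ := List.mem_map.1 ha
    exact hv'mem _ _
  have key : ∀ μ ν, T.Adj μ ν → ∃ y ∈ U μ ∩ U ν, u ν = u μ * v μ ν y := by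
    intro μ ν hadj
    have hne : (U μ ∩ U ν).Nonempty := ((hG μ ν).1 (hTG hadj)).2
    by_cases hmem : ν ∈ (p μ).support
    · -- the path to μ passes through ν; its last edge is ν-μ
      have h1 : ((p μ).takeUntil ν hmem).IsPath := (hp μ).takeUntil hmem
      have h2 : ((p μ).dropUntil ν hmem).IsPath := (hp μ).dropUntil hmem
      have hq : p ν = (p μ).takeUntil ν hmem := huniq _ _ (hp ν) h1
      have hsingle : (p μ).dropUntil ν hmem = SimpleGraph.Walk.cons hadj.symm SimpleGraph.Walk.nil :=
        huniq _ _ h2 (by simp [SimpleGraph.Walk.cons_isPath_iff]; exact hadj.ne')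
      have hdarts : (p μ).darts = ((p μ).takeUntil ν hmem).darts ++ ((p μ).dropUntil ν hmem).darts := by
        conv_lhs => rw [← (p μ).take_spec hmem]
        rw [SimpleGraph.Walk.darts_append]
      have hnm : (U ν ∩ U μ).Nonempty := by rwa [Set.inter_comm]
      have hu' : u μ = u ν * v' ν μ := by
        rw [hudef]
        simp only
        rw [hdarts, hq, hsingle, List.map_append, List.prod_append]
        simp
      have hvv : v' ν μ = v ν μ hnm.some := by simp [hv'def, hnm]
      have hy : hnm.some ∈ U ν ∩ U μ := hnm.some_mem
      refine ⟨hnm.some, by rwa [Set.inter_comm], ?_⟩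
      have hw : v ν μ hnm.some ∈ unitary A := hv.2.1 ν μ _ hy
      have hstar : star (v ν μ hnm.some) = v μ ν hnm.some := hv.2.2.1 ν μ _ hy
      calc u ν = u ν * (v ν μ hnm.some * star (v ν μ hnm.some)) := by
            rw [Unitary.mul_star_self_of_mem hw, mul_one]
        _ = (u ν * v' ν μ) * star (v ν μ hnm.some) := by rw [hvv, mul_assoc]
        _ = u μ * v μ ν hnm.some := by rw [← hu', hstar]
    · -- extend the path to μ by the edge μ-ν
      have hcpath : ((p μ).concat hadj).IsPath := by
        have : ((p μ).concat hadj).reverse.IsPath := by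
          rw [SimpleGraph.Walk.reverse_concat]
          rw [SimpleGraph.Walk.cons_isPath_iff]
          exact ⟨(hp μ).reverse, by simpa using hmem⟩
        simpa [SimpleGraph.Walk.concat] using this.reverse
      have hq : p ν = (p μ).concat hadj := huniq _ _ (hp ν) hcpath
      refine ⟨hne.some, hne.some_mem, ?_⟩
      have hvv : v' μ ν = v μ ν hne.some := by simp [hv'def, hne]
      rw [hudef]
      simp only
      rw [hq, SimpleGraph.Walk.darts_concat]
      simp [List.concat_eq_append, hvv]
  refine ⟨u, humem, ?_⟩
  intro μ ν hadj x hx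
  obtain ⟨y, hy, huv⟩ := key μ ν hadj
  have h2 : u μ * v μ ν y * star (u ν) = 1 := by
    rw [← huv]
    exact Unitary.mul_star_self_of_mem (humem ν)
  have h1 : u μ * v μ ν x * star (u ν) - 1
      = u μ * (v μ ν x - v μ ν y) * star (u ν) := by
    rw [mul_sub, sub_mul, h2]
  rw [h1]
  rcases subsingleton_or_nontrivial A with hA | hA
  · rw [Subsingleton.elim (u μ * (v μ ν x - v μ ν y) * star (u ν)) (0 : A), norm_zero]
    exact hε
  · have hb : ‖u μ * (v μ ν x - v μ ν y) * star (u ν)‖ ≤ ‖v μ ν x - v μ ν y‖ := by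
      calc ‖u μ * (v μ ν x - v μ ν y) * star (u ν)‖
          ≤ ‖u μ * (v μ ν x - v μ ν y)‖ * ‖star (u ν)‖ := norm_mul_le _ _
        _ = ‖u μ * (v μ ν x - v μ ν y)‖ := by
            rw [norm_star, CStarRing.norm_of_mem_unitary (humem ν), mul_one]
        _ ≤ ‖u μ‖ * ‖v μ ν x - v μ ν y‖ := norm_mul_le _ _
        _ = ‖v μ ν x - v μ ν y‖ := by rw [CStarRing.norm_of_mem_unitary (humem μ), one_mul]
    exact lt_of_le_of_lt hb (hflat μ ν x hx y hy)
end

section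
/- Let X be a topological space, I a finite index set with |I| elements, (U_μ)_{μ∈I} an open cover of X admitting a subordinate square-root partition of unity, A a unital C*-algebra, and set C₁ := |I|² + 1. Let v and v' be two (ε,U)-flat unitary Čech 1-cocycles subordinate to the cover with ‖v_{μν}(x) − v'_{μν}(x)‖ < ε for all μ, ν ∈ I and x ∈ U_μ ∩ U_ν, and assume 0 < ε < 1/(3·C₁). Then there exists a family of continuous maps V_{μν} : X × [0,1] → A such that V_{μν}(·,0) = v_{μν}, V_{μν}(·,1) = v'_{μν}, and for every t ∈ [0,1] the family (V_{μν}(·,t))_{μ,ν∈I} is a ((4·C₁+1)ε, U)-flat unitary Čech 1-cocycle subordinate to the cover. -/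
namespace CFCHomotopyAux

open Polynomial

noncomputable def isq : ℝ → ℝ := fun x => (Real.sqrt x)⁻¹

lemma isq_contOn {s : Set ℝ} (hs : s ⊆ Set.Icc (1/2 : ℝ) (3/2)) : ContinuousOn isq s := by
  intro x hx
  have hx2 := hs hx
  have h0 : Real.sqrt x ≠ 0 := Real.sqrt_ne_zero'.mpr (lt_of_lt_of_le (by norm_num) hx2.1)
  exact ((Real.continuous_sqrt.continuousAt).inv₀ h0).continuousWithinAt

lemma isq_bound {δ x : ℝ} (hδ0 : 0 ≤ δ) (hδ : δ ≤ 1/2) (hx1 : 1 - δ ≤ x) (hx2 : x ≤ 1 + δ) :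
    |isq x - 1| ≤ δ := by
  have hxpos : (0:ℝ) < x := by linarith
  have hs0 : 0 < Real.sqrt x := Real.sqrt_pos.mpr hxpos
  have hss : Real.sqrt x * Real.sqrt x = x := Real.mul_self_sqrt hxpos.le
  set s := Real.sqrt x with hsdef
  have hd1 : 0 ≤ δ * (1/2 - δ) := mul_nonneg hδ0 (by linarith)
  have hd2 : 0 ≤ (δ * δ) * (1/2 - δ) := mul_nonneg (mul_nonneg hδ0 hδ0) (by linarith)
  have hup2 : 1 ≤ (s * (1 + δ))^2 := by
    have hsq : (s * (1 + δ))^2 = x * (1+δ)^2 := by rw [mul_pow, sq s, hss]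
    have hmul : (1 - δ) * (1+δ)^2 ≤ x * (1+δ)^2 :=
      mul_le_mul_of_nonneg_right hx1 (sq_nonneg _)
    nlinarith [hmul]
  have hup : 1 ≤ s * (1 + δ) := by nlinarith [mul_pos hs0 (show (0:ℝ) < 1 + δ by linarith)]
  have hlow2 : ((1 - δ) * s)^2 ≤ 1 := by
    have hsq : ((1 - δ) * s)^2 = (1-δ)^2 * x := by rw [mul_pow, sq s, hss]
    have hmul : (1-δ)^2 * x ≤ (1-δ)^2 * (1+δ) :=
      mul_le_mul_of_nonneg_left hx2 (sq_nonneg _)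
    nlinarith [hmul]
  have hlow : (1 - δ) * s ≤ 1 := by nlinarith [mul_pos (show (0:ℝ) < 1 - δ by linarith) hs0]
  have h1 : isq x ≤ 1 + δ := by
    rw [isq, ← hsdef, inv_eq_one_div, div_le_iff₀ hs0]
    linarith
  have h2 : 1 - δ ≤ isq x := by
    rw [isq, ← hsdef, inv_eq_one_div, le_div_iff₀ hs0]
    linarith
  rw [abs_le]
  constructor <;> linarith

lemma exists_poly {ε : ℝ} (hε : 0 < ε) :
    ∃ p : ℝ[X], ∀ x ∈ Set.Icc (1/2:ℝ) (3/2), |isq x - p.eval x| ≤ ε := by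
  have hcont : Continuous ((Set.Icc (1/2:ℝ) (3/2)).restrict isq) :=
    (isq_contOn (subset_refl _)).restrict
  obtain ⟨p, hp⟩ := exists_polynomial_near_continuousMap (1/2) (3/2) ⟨_, hcont⟩ ε hε
  refine ⟨p, fun x hx => ?_⟩
  have h2 := ContinuousMap.norm_coe_le_norm
    (p.toContinuousMapOn (Set.Icc (1/2:ℝ) (3/2)) - ⟨_, hcont⟩) ⟨x, hx⟩
  have h3 : ‖p.eval x - isq x‖ ≤ ‖p.toContinuousMapOn (Set.Icc (1/2:ℝ) (3/2)) - (⟨_, hcont⟩ : C(Set.Icc (1/2:ℝ) (3/2), ℝ))‖ := by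
    simpa [Polynomial.toContinuousMapOn, Polynomial.toContinuousMap, Set.restrict] using h2
  rw [Real.norm_eq_abs] at h3
  rw [abs_sub_comm]
  linarith [hp, h3]

variable {A : Type*} [CStarAlgebra A]

lemma norm_one_le' : ‖(1:A)‖ ≤ 1 := by
  rcases subsingleton_or_nontrivial A with h | h
  · simp [Subsingleton.elim (1:A) 0]
  · exact norm_one.le

lemma norm_mul_unitary_right (z u : A) (h : u * star u = 1) : ‖z * u‖ = ‖z‖ := by
  have h1 : ‖z * u‖ * ‖z * u‖ = ‖z‖ * ‖z‖ := by
    rw [← CStarRing.norm_self_mul_star (x := z * u), ← CStarRing.norm_self_mul_star (x := z)]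
    congr 1
    rw [star_mul, mul_assoc, ← mul_assoc u, h, one_mul]
  exact (mul_self_inj (norm_nonneg _) (norm_nonneg _)).mp h1

lemma norm_unitary_mul_left (u z : A) (h : star u * u = 1) : ‖u * z‖ = ‖z‖ := by
  have h1 : ‖u * z‖ * ‖u * z‖ = ‖z‖ * ‖z‖ := by
    rw [← CStarRing.norm_star_mul_self (x := u * z), ← CStarRing.norm_star_mul_self (x := z)]
    congr 1
    rw [star_mul, mul_assoc, ← mul_assoc (star u), h, one_mul]
  exact (mul_self_inj (norm_nonneg _) (norm_nonneg _)).mp h1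

lemma spectrum_subset_icc {c : A} {δ : ℝ} (h : ‖c - 1‖ ≤ δ) :
    spectrum ℝ c ⊆ Set.Icc (1 - δ) (1 + δ) := by
  intro x hx
  rcases subsingleton_or_nontrivial A with hsub | hnt
  · exact absurd hx (by simp [spectrum.mem_iff, isUnit_of_subsingleton])
  · have hx1 : x - 1 ∈ spectrum ℝ (c - algebraMap ℝ A 1) := by
      rw [← spectrum.sub_singleton_eq]
      exact Set.sub_mem_sub hx rfl
    have hb : ‖x - 1‖ ≤ ‖c - algebraMap ℝ A 1‖ := spectrum.norm_le_norm_of_mem hx1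
    rw [map_one] at hb
    have : |x - 1| ≤ δ := le_trans hb h
    rw [abs_le] at this
    exact ⟨by linarith [this.1], by linarith [this.2]⟩

noncomputable def invSqrt (c : A) : A := cfc isq c

lemma invSqrt_selfAdjoint (c : A) : IsSelfAdjoint (invSqrt c) := cfc_predicate _ _

lemma invSqrt_sq_mul {c : A} (hsa : IsSelfAdjoint c)
    (hs : spectrum ℝ c ⊆ Set.Icc (1/2:ℝ) (3/2)) :
    invSqrt c * invSqrt c * c = 1 := by
  have hcont : ContinuousOn isq (spectrum ℝ c) := isq_contOn hs
  have h1 : invSqrt c * invSqrt c = cfc (fun x => isq x * isq x) c :=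
    (cfc_mul _ _ c hcont hcont).symm
  calc invSqrt c * invSqrt c * c
      = cfc (fun x => isq x * isq x) c * cfc (id : ℝ → ℝ) c := by rw [h1, cfc_id ℝ c hsa]
    _ = cfc (fun x => (isq x * isq x) * id x) c :=
        (cfc_mul _ _ c (hcont.mul hcont) continuousOn_id).symm
    _ = cfc (fun _ : ℝ => (1:ℝ)) c := by
        refine cfc_congr fun x hx => ?_
        have hx0 : (0:ℝ) < x := lt_of_lt_of_le (by norm_num) (hs hx).1
        simp only [isq, id]
        rw [← mul_inv, Real.mul_self_sqrt hx0.le, inv_mul_cancel₀ (ne_of_gt hx0)]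
    _ = 1 := cfc_const_one ℝ c hsa

lemma invSqrt_comm {c : A} (hsa : IsSelfAdjoint c) : c * invSqrt c = invSqrt c * c := by
  have h := cfc_commute_cfc (R := ℝ) id isq c
  rw [cfc_id ℝ c hsa] at h
  unfold invSqrt
  exact h.eq

lemma norm_invSqrt_sub_one {c : A} {δ : ℝ} (hsa : IsSelfAdjoint c)
    (hδ0 : 0 ≤ δ) (hδ : δ ≤ 1/2) (h : ‖c - 1‖ ≤ δ) :
    ‖invSqrt c - 1‖ ≤ δ := by
  have hspec := spectrum_subset_icc h
  have hspec' : spectrum ℝ c ⊆ Set.Icc (1/2:ℝ) (3/2) :=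
    hspec.trans (Set.Icc_subset_Icc (by linarith) (by linarith))
  have hcont := isq_contOn hspec'
  have h2 : cfc (fun x => isq x - 1) c = invSqrt c - 1 := by
    rw [cfc_sub _ _ c hcont continuousOn_const, cfc_const_one ℝ c hsa]
    rfl
  rw [← h2]
  exact norm_cfc_le hδ0 fun x hx => by
    rw [Real.norm_eq_abs]
    exact isq_bound hδ0 hδ (hspec hx).1 (hspec hx).2

lemma invSqrt_one : invSqrt (1 : A) = 1 := by
  have hs : spectrum ℝ (1:A) ⊆ Set.Icc 1 1 := by
    simpa using spectrum_subset_icc (c := (1:A)) (δ := 0) (by simp)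
  rw [invSqrt]
  have heq : (spectrum ℝ (1:A)).EqOn isq (fun _ => 1) := fun x hx => by
    have hx1 : x = 1 := le_antisymm (hs hx).2 (hs hx).1
    simp [isq, hx1]
  rw [cfc_congr heq]
  exact cfc_const_one ℝ 1 (IsSelfAdjoint.one A)

lemma invSqrt_approx {c : A} (hsa : IsSelfAdjoint c)
    (hs : spectrum ℝ c ⊆ Set.Icc (1/2:ℝ) (3/2))
    {p : ℝ[X]} {M : ℝ} (hM : 0 ≤ M)
    (hp : ∀ x ∈ Set.Icc (1/2:ℝ) (3/2), |isq x - p.eval x| ≤ M) :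
    ‖invSqrt c - aeval c p‖ ≤ M := by
  have hcont := isq_contOn hs
  have h1 : cfc (fun x => isq x - p.eval x) c = invSqrt c - aeval c p := by
    rw [cfc_sub isq (fun x => p.eval x) c hcont (p.continuous).continuousOn,
      cfc_polynomial p c hsa]
    rfl
  rw [← h1]
  exact norm_cfc_le hM fun x hx => by
    rw [Real.norm_eq_abs]
    exact hp x (hs hx)

lemma aeval_conj (w c : A) (h1 : star w * w = 1) (h2 : w * star w = 1) (p : ℝ[X]) :
    aeval (star w * c * w) p = star w * aeval c p * w := by
  have hws : ∀ z : A, w * (star w * z) = z := fun z => by rw [← mul_assoc, h2, one_mul]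
  have hpow : ∀ n : ℕ, (star w * c * w)^n = star w * c^n * w := by
    intro n
    induction n with
    | zero => rw [pow_zero, pow_zero, mul_one, h1]
    | succ n ih =>
      rw [pow_succ, ih, pow_succ]
      simp only [mul_assoc]
      rw [hws]
  induction p using Polynomial.induction_on' with
  | add p q hp hq => rw [map_add, map_add, hp, hq, mul_add, add_mul]
  | monomial n r =>
    rw [aeval_monomial, aeval_monomial, hpow]
    calc (algebraMap ℝ A) r * (star w * c ^ n * w)
        = ((algebraMap ℝ A) r * (star w * c ^ n)) * w := by simp only [mul_assoc]
      _ = ((star w * c ^ n) * (algebraMap ℝ A) r) * w := by rw [Algebra.commutes]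
      _ = (star w * (c ^ n * (algebraMap ℝ A) r)) * w := by simp only [mul_assoc]
      _ = (star w * ((algebraMap ℝ A) r * c ^ n)) * w := by rw [Algebra.commutes]
      _ = star w * ((algebraMap ℝ A) r * c ^ n) * w := rfl

lemma invSqrt_conj {c w : A} (hsa : IsSelfAdjoint c)
    (hs : spectrum ℝ c ⊆ Set.Icc (1/2:ℝ) (3/2))
    (h1 : star w * w = 1) (h2 : w * star w = 1) :
    invSqrt (star w * c * w) = star w * invSqrt c * w := by
  have hsa' : IsSelfAdjoint (star w * c * w) := by
    rw [IsSelfAdjoint, star_mul, star_mul, star_star, hsa.star_eq, mul_assoc]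
  have hspec' : spectrum ℝ (star w * c * w) = spectrum ℝ c := by
    have : star w * c * w
        = (↑(⟨w, star w, h2, h1⟩ : Aˣ)⁻¹ : A) * c * ↑(⟨w, star w, h2, h1⟩ : Aˣ) := rfl
    rw [this, spectrum.units_conjugate']
  have hkey : ∀ M : ℝ, 0 < M →
      ‖invSqrt (star w * c * w) - star w * invSqrt c * w‖ ≤ 2 * M := by
    intro M hM
    obtain ⟨p, hp⟩ := exists_poly hM
    have e1 : ‖invSqrt (star w * c * w) - aeval (star w * c * w) p‖ ≤ M :=
      invSqrt_approx hsa' (by rw [hspec']; exact hs) hM.le hp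
    have e2 : ‖invSqrt c - aeval c p‖ ≤ M := invSqrt_approx hsa hs hM.le hp
    have e3 : ‖aeval (star w * c * w) p - star w * invSqrt c * w‖
        = ‖invSqrt c - aeval c p‖ := by
      rw [aeval_conj w c h1 h2 p]
      have hD : star w * aeval c p * w - star w * invSqrt c * w
          = star w * (aeval c p - invSqrt c) * w := by rw [mul_sub, sub_mul]
      rw [hD, norm_mul_unitary_right _ _ h2,
        norm_unitary_mul_left (star w) _ (by rw [star_star]; exact h2), norm_sub_rev]
    calc ‖invSqrt (star w * c * w) - star w * invSqrt c * w‖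
        ≤ ‖invSqrt (star w * c * w) - aeval (star w * c * w) p‖
          + ‖aeval (star w * c * w) p - star w * invSqrt c * w‖ := norm_sub_le_norm_sub_add_norm_sub _ _ _
      _ ≤ M + M := by rw [e3]; exact add_le_add e1 e2
      _ = 2 * M := by ring
  have h0 : ‖invSqrt (star w * c * w) - star w * invSqrt c * w‖ ≤ 0 := by
    by_contra hcon
    push_neg at hcon
    have := hkey (‖invSqrt (star w * c * w) - star w * invSqrt c * w‖ / 3) (by linarith)
    linarith
  have := norm_le_zero_iff.mp h0
  exact sub_eq_zero.mp this

lemma invSqrt_continuous {Q : Type*} [TopologicalSpace Q] {g : Q → A} (hg : Continuous g)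
    (hsa : ∀ q, IsSelfAdjoint (g q)) (hs : ∀ q, spectrum ℝ (g q) ⊆ Set.Icc (1/2:ℝ) (3/2)) :
    Continuous fun q => invSqrt (g q) := by
  rw [continuous_iff_continuousAt]
  intro q₀
  rw [ContinuousAt, Metric.tendsto_nhds]
  intro ε hε
  obtain ⟨p, hp⟩ := exists_poly (show (0:ℝ) < ε/4 by linarith)
  have hap : Continuous fun q => aeval (g q) p := (p.continuous_aeval).comp hg
  have hev : ∀ᶠ q in nhds q₀, dist (aeval (g q) p) (aeval (g q₀) p) < ε/4 := by
    have h := hap.continuousAt (x := q₀)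
    rw [ContinuousAt, Metric.tendsto_nhds] at h
    exact h _ (by linarith)
  filter_upwards [hev] with q hq
  have e1 : ‖invSqrt (g q) - aeval (g q) p‖ ≤ ε/4 :=
    invSqrt_approx (hsa q) (hs q) (by linarith) hp
  have e2 : ‖invSqrt (g q₀) - aeval (g q₀) p‖ ≤ ε/4 :=
    invSqrt_approx (hsa q₀) (hs q₀) (by linarith) hp
  have h4 := dist_triangle4 (invSqrt (g q)) (aeval (g q) p) (aeval (g q₀) p) (invSqrt (g q₀))
  rw [dist_eq_norm, dist_eq_norm, dist_eq_norm, dist_eq_norm] at *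
  rw [norm_sub_rev] at e2
  linarith

lemma norm_le_one_add {b : A} {δ : ℝ} (hb : ‖b - 1‖ ≤ δ) : ‖b‖ ≤ 1 + δ := by
  calc ‖b‖ = ‖(b - 1) + 1‖ := by rw [sub_add_cancel]
    _ ≤ ‖b - 1‖ + ‖(1:A)‖ := norm_add_le _ _
    _ ≤ 1 + δ := by have := norm_one_le' (A := A); linarith

lemma star_mul_self_norm_sub_one {b : A} {δ : ℝ} (hδ0 : 0 ≤ δ) (hb : ‖b - 1‖ ≤ δ) :
    ‖star b * b - 1‖ ≤ δ * (2 + δ) := by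
  have hnb : ‖b‖ ≤ 1 + δ := norm_le_one_add hb
  have hdecomp : star b * b - 1 = star b * (b - 1) + (star b - 1) := by noncomm_ring
  rw [hdecomp]
  have h2 : ‖star b - 1‖ = ‖b - 1‖ := by
    rw [show star b - 1 = star (b - 1) by rw [star_sub, star_one], norm_star]
  have h3 : ‖star b * (b - 1)‖ ≤ (1 + δ) * δ := by
    calc ‖star b * (b - 1)‖ ≤ ‖star b‖ * ‖b - 1‖ := norm_mul_le _ _
      _ ≤ (1 + δ) * δ := by
          rw [norm_star]
          exact mul_le_mul hnb hb (norm_nonneg _) (by linarith)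
  calc ‖star b * (b - 1) + (star b - 1)‖ ≤ ‖star b * (b - 1)‖ + ‖star b - 1‖ := norm_add_le _ _
    _ ≤ (1 + δ) * δ + δ := by rw [h2]; linarith [hb]
    _ = δ * (2 + δ) := by ring

lemma spec_star_mul_self {b : A} {δ : ℝ} (hδ0 : 0 ≤ δ) (hδ : δ ≤ 1/5) (hb : ‖b - 1‖ ≤ δ) :
    spectrum ℝ (star b * b) ⊆ Set.Icc (1/2:ℝ) (3/2) := by
  have h := spectrum_subset_icc (star_mul_self_norm_sub_one hδ0 hb)
  refine h.trans (Set.Icc_subset_Icc ?_ ?_) <;> nlinarith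

lemma unitarize {b : A} {δ : ℝ} (hδ0 : 0 ≤ δ) (hδ : δ ≤ 1/5) (hb : ‖b - 1‖ ≤ δ) :
    star (b * invSqrt (star b * b)) * (b * invSqrt (star b * b)) = 1 ∧
    (b * invSqrt (star b * b)) * star (b * invSqrt (star b * b)) = 1 ∧
    ‖b * invSqrt (star b * b) - 1‖ ≤ 4 * δ := by
  have hsa : IsSelfAdjoint (star b * b) := IsSelfAdjoint.star_mul_self b
  have hspec := spec_star_mul_self hδ0 hδ hb
  have hssa : IsSelfAdjoint (invSqrt (star b * b)) := invSqrt_selfAdjoint _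
  set s := invSqrt (star b * b) with hsdef
  have hkey : s * s * (star b * b) = 1 := invSqrt_sq_mul hsa hspec
  have hkey' : s * (s * (star b * b)) = 1 := by rw [← mul_assoc]; exact hkey
  have hcomm : (star b * b) * s = s * (star b * b) := invSqrt_comm hsa
  have hstar_u : star (b * s) = s * star b := by rw [star_mul, hssa.star_eq]
  have hμ1 : star (b * s) * (b * s) = 1 := by
    rw [hstar_u]
    calc s * star b * (b * s) = s * (star b * b * s) := by simp only [mul_assoc]
      _ = s * (s * (star b * b)) := by rw [hcomm]
      _ = 1 := hkey'
  refine ⟨hμ1, ?_, ?_⟩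
  · have hbu : IsUnit b := by
      have hlt : ‖(1:A) - b‖ < 1 := by rw [norm_sub_rev]; linarith
      exact ⟨Units.oneSub (1 - b) hlt, by simp [Units.oneSub]⟩
    rw [hstar_u]
    refine hbu.mul_right_cancel ?_
    rw [one_mul]
    calc b * s * (s * star b) * b = b * (s * (s * (star b * b))) := by simp only [mul_assoc]
      _ = b := by rw [hkey', mul_one]
  · have hδ' : δ * (2 + δ) ≤ 1/2 := by nlinarith
    have hs1 : ‖s - 1‖ ≤ δ * (2 + δ) :=
      norm_invSqrt_sub_one hsa (by positivity) hδ' (star_mul_self_norm_sub_one hδ0 hb)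
    have hdecomp : b * s - 1 = b * (s - 1) + (b - 1) := by noncomm_ring
    rw [hdecomp]
    have hnb : ‖b‖ ≤ 1 + δ := norm_le_one_add hb
    calc ‖b * (s - 1) + (b - 1)‖ ≤ ‖b * (s - 1)‖ + ‖b - 1‖ := norm_add_le _ _
      _ ≤ ‖b‖ * ‖s - 1‖ + δ := add_le_add (norm_mul_le _ _) hb
      _ ≤ (1 + δ) * (δ * (2 + δ)) + δ := by
          refine add_le_add_left (mul_le_mul hnb hs1 (norm_nonneg _) (by linarith)) δ
      _ ≤ 4 * δ := by nlinarith

end CFCHomotopyAux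


open CFCHomotopyAux

/-- core of Lemma `lem:homotopy`: two `(ε, U)`-flat unitary Čech
cocycles at uniform distance less than `ε` (with `0 < ε < 1/(3C₁)`, `C₁ = |I|² + 1`) are
homotopic through `((4C₁ + 1)ε, U)`-flat cocycles. -/
theorem close_flat_cocycles_homotopic
    {X I A : Type*} [TopologicalSpace X] [Fintype I] [CStarAlgebra A]
    (U : I → Set X) (hopen : ∀ μ, IsOpen (U μ)) (hcover : ∀ x, ∃ μ, x ∈ U μ)
    (hpou : ∃ η : I → X → ℝ, IsSqrtPartitionOfUnity U η)
    (C₁ : ℝ) (hC₁ : C₁ = (Fintype.card I : ℝ) ^ 2 + 1)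
    (ε : ℝ) (hε0 : 0 < ε) (hε : ε < 1 / (3 * C₁))
    (v v' : I → I → X → A)
    (hv : IsUnitaryCechCocycle U v) (hvf : IsFlatCocycle ε U v)
    (hv' : IsUnitaryCechCocycle U v') (hv'f : IsFlatCocycle ε U v')
    (hclose : ∀ μ ν, ∀ x ∈ U μ ∩ U ν, ‖v μ ν x - v' μ ν x‖ < ε) :
    ∃ V : I → I → ℝ → X → A,
      (∀ μ ν, ContinuousOn (fun q : X × ℝ => V μ ν q.2 q.1) (Set.univ ×ˢ Set.Icc 0 1)) ∧
      (∀ μ ν x, V μ ν 0 x = v μ ν x ∧ V μ ν 1 x = v' μ ν x) ∧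
      (∀ t ∈ Set.Icc (0 : ℝ) 1,
        IsUnitaryCechCocycle U (fun μ ν x => V μ ν t x) ∧
        IsFlatCocycle ((4 * C₁ + 1) * ε) U (fun μ ν x => V μ ν t x)) := by
  classical
  obtain ⟨η, hηc, hη0, hηU, hηsum⟩ := hpou
  have hC₁pos : (0:ℝ) < C₁ := by
    rw [hC₁]; positivity
  by_cases hcard : Fintype.card I ≤ 1
  · -- degenerate case: at most one index
    have hsub : Subsingleton I := Fintype.card_le_one_iff_subsingleton.mp hcard
    refine ⟨fun μ ν _ x => v μ ν x, ?_, ?_, ?_⟩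
    · intro μ ν
      exact ((hv.1 μ ν).comp continuous_fst).continuousOn
    · intro μ ν x
      refine ⟨rfl, ?_⟩
      beta_reduce
      obtain ⟨ρ, hρ⟩ := hcover x
      have hxμ : x ∈ U μ := by rwa [Subsingleton.elim ρ μ] at hρ
      have hνμ : ν = μ := Subsingleton.elim ν μ
      rw [hνμ, hv.2.2.2.1 μ x hxμ, hv'.2.2.2.1 μ x hxμ]
    · intro t _
      refine ⟨hv, fun μ ν x hx y hy => ?_⟩
      have h1 := hvf μ ν x hx y hy
      have h2 : ε ≤ (4 * C₁ + 1) * ε := by nlinarith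
      linarith
  · push_neg at hcard
    have hI2 : (2:ℝ) ≤ (Fintype.card I : ℝ) := by exact_mod_cast hcard
    have hC5 : (5:ℝ) ≤ C₁ := by rw [hC₁]; nlinarith
    have hε15 : ε ≤ 1/15 := by
      have h3 : (15:ℝ) ≤ 3 * C₁ := by linarith
      have h4 : 1 / (3 * C₁) ≤ 1/15 := by
        apply one_div_le_one_div_of_le (by norm_num) h3
      linarith
    have hεle : ε ≤ 1/5 := by linarith
    have hεb : (0:ℝ) ≤ ε := hε0.le
    -- unitary data of v, v'
    have hvU : ∀ μ ν x, x ∈ U μ ∩ U ν →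
        star (v μ ν x) * v μ ν x = 1 ∧ v μ ν x * star (v μ ν x) = 1 :=
      fun μ ν x hx => Unitary.mem_iff.mp (hv.2.1 μ ν x hx)
    have hv'U : ∀ μ ν x, x ∈ U μ ∩ U ν →
        star (v' μ ν x) * v' μ ν x = 1 ∧ v' μ ν x * star (v' μ ν x) = 1 :=
      fun μ ν x hx => Unitary.mem_iff.mp (hv'.2.1 μ ν x hx)
    -- definitions
    set T : I → I → X → A := fun μ ρ x => v μ ρ x * v' ρ μ x with hT
    set r : A → A := fun z => (ε / max ε ‖z‖) • z with hr
    set a : I → X → A := fun μ x => 1 + ∑ ρ, (η ρ x)^2 • r (T μ ρ x - 1) with ha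
    set τ : ℝ → ℝ := fun t => max 0 (min 1 t) with hτ
    set b : I → ℝ → X → A := fun μ t x => 1 + τ t • (a μ x - 1) with hb
    set u : I → ℝ → X → A :=
      fun μ t x => b μ t x * invSqrt (star (b μ t x) * b μ t x) with hu
    -- basic facts about r
    have hrnorm : ∀ z : A, ‖r z‖ ≤ ε := by
      intro z
      have hmaxpos : 0 < max ε ‖z‖ := lt_max_iff.mpr (Or.inl hε0)
      simp only [hr]
      rw [norm_smul, Real.norm_eq_abs, abs_of_nonneg (by positivity)]
      calc (ε / max ε ‖z‖) * ‖z‖ ≤ (ε / max ε ‖z‖) * max ε ‖z‖ := by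
            exact mul_le_mul_of_nonneg_left (le_max_right _ _) (by positivity)
        _ = ε := div_mul_cancel₀ ε (ne_of_gt hmaxpos)
    have hrid : ∀ z : A, ‖z‖ ≤ ε → r z = z := by
      intro z hz
      simp only [hr]
      rw [max_eq_left hz, div_self (ne_of_gt hε0), one_smul]
    have hrcont : Continuous r := by
      rw [hr]
      exact (continuous_const.div (continuous_const.max continuous_norm)
        (fun z => ne_of_gt (lt_max_iff.mpr (Or.inl hε0)))).smul continuous_id
    -- facts about a
    have hTc : ∀ μ ρ, Continuous (T μ ρ) := fun μ ρ => (hv.1 μ ρ).mul (hv'.1 ρ μ)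
    have hac : ∀ μ, Continuous (a μ) := by
      intro μ
      rw [ha]
      refine continuous_const.add (continuous_finset_sum _ fun ρ _ => ?_)
      exact ((hηc ρ).pow 2).smul (hrcont.comp ((hTc μ ρ).sub continuous_const))
    have hanorm : ∀ μ x, ‖a μ x - 1‖ ≤ ε := by
      intro μ x
      simp only [ha]
      rw [add_sub_cancel_left]
      calc ‖∑ ρ, (η ρ x)^2 • r (T μ ρ x - 1)‖
          ≤ ∑ ρ, ‖(η ρ x)^2 • r (T μ ρ x - 1)‖ := norm_sum_le _ _
        _ ≤ ∑ ρ, (η ρ x)^2 * ε := by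
            refine Finset.sum_le_sum fun ρ _ => ?_
            rw [norm_smul, Real.norm_eq_abs, abs_of_nonneg (by positivity)]
            exact mul_le_mul_of_nonneg_left (hrnorm _) (by positivity)
        _ = ε := by rw [← Finset.sum_mul, hηsum x, one_mul]
    -- facts about τ
    have hτc : Continuous τ := continuous_const.max (continuous_const.min continuous_id)
    have hτ01 : ∀ t, 0 ≤ τ t ∧ τ t ≤ 1 :=
      fun t => ⟨le_max_left _ _, max_le (by norm_num) (min_le_left _ _)⟩
    have hτzero : τ 0 = 0 := by rw [hτ]; norm_num
    have hτone : τ 1 = 1 := by rw [hτ]; norm_num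
    -- facts about b
    have hbnorm : ∀ μ t x, ‖b μ t x - 1‖ ≤ ε := by
      intro μ t x
      simp only [hb]
      rw [add_sub_cancel_left, norm_smul, Real.norm_eq_abs, abs_of_nonneg (hτ01 t).1]
      calc τ t * ‖a μ x - 1‖ ≤ 1 * ε :=
            mul_le_mul (hτ01 t).2 (hanorm μ x) (norm_nonneg _) one_pos.le
        _ = ε := one_mul ε
    have hb0 : ∀ μ x, b μ 0 x = 1 := by
      intro μ x
      simp only [hb]
      rw [hτzero, zero_smul, add_zero]
    have hb1 : ∀ μ x, b μ 1 x = a μ x := by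
      intro μ x
      simp only [hb]
      rw [hτone, one_smul]
      abel
    -- facts about u
    have huprops : ∀ μ t x, star (u μ t x) * u μ t x = 1 ∧ u μ t x * star (u μ t x) = 1 ∧
        ‖u μ t x - 1‖ ≤ 4 * ε := by
      intro μ t x
      simp only [hu]
      exact unitarize hεb hεle (hbnorm μ t x)
    have huc : ∀ μ, Continuous (fun q : X × ℝ => u μ q.2 q.1) := by
      intro μ
      have hbc : Continuous (fun q : X × ℝ => b μ q.2 q.1) := by
        simp only [hb]
        exact continuous_const.add ((hτc.comp continuous_snd).smul
          (((hac μ).comp continuous_fst).sub continuous_const))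
      simp only [hu]
      exact hbc.mul (invSqrt_continuous ((hbc.star).mul hbc)
        (fun q => IsSelfAdjoint.star_mul_self _)
        (fun q => spec_star_mul_self hεb hεle (hbnorm μ q.2 q.1)))
    have hu0 : ∀ μ x, u μ 0 x = 1 := by
      intro μ x
      simp only [hu]
      rw [hb0 μ x, star_one, one_mul, one_mul, invSqrt_one]
    have huosc : ∀ μ t x y, ‖u μ t x - u μ t y‖ ≤ 8 * ε := by
      intro μ t x y
      calc ‖u μ t x - u μ t y‖ = ‖(u μ t x - 1) - (u μ t y - 1)‖ := by
            rw [sub_sub_sub_cancel_right]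
        _ ≤ ‖u μ t x - 1‖ + ‖u μ t y - 1‖ := norm_sub_le _ _
        _ ≤ 4 * ε + 4 * ε := add_le_add (huprops μ t x).2.2 (huprops μ t y).2.2
        _ = 8 * ε := by ring
    -- the gauge identity
    have hTnorm : ∀ ν ρ x, x ∈ U ν → x ∈ U ρ → ‖T ν ρ x - 1‖ ≤ ε := by
      intro ν ρ x hν hρ
      have hmem : x ∈ U ν ∩ U ρ := ⟨hν, hρ⟩
      have h1 : v ν ρ x * v ρ ν x = 1 := by
        have h := hv.2.2.2.2 ν ρ ν x ⟨⟨hν, hρ⟩, hν⟩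
        rw [h, hv.2.2.2.1 ν x hν]
      have hdec : T ν ρ x - 1 = v ν ρ x * (v' ρ ν x - v ρ ν x) := by
        simp only [hT]
        rw [mul_sub, h1]
      rw [hdec, norm_unitary_mul_left _ _ (hvU ν ρ x hmem).1]
      have hstar : v' ρ ν x - v ρ ν x = star (v' ν ρ x - v ν ρ x) := by
        rw [star_sub, hv.2.2.1 ν ρ x hmem, hv'.2.2.1 ν ρ x hmem]
      rw [hstar, norm_star, norm_sub_rev]
      exact (hclose ν ρ x hmem).le
    have hgauge : ∀ μ ν x, x ∈ U μ ∩ U ν → v μ ν x * a ν x = a μ x * v' μ ν x := by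
      intro μ ν x hx
      obtain ⟨hxμ, hxν⟩ := hx
      have hterm : ∀ ρ : I, v μ ν x * ((η ρ x)^2 • r (T ν ρ x - 1))
          = (η ρ x)^2 • r (T μ ρ x - 1) * v' μ ν x + (η ρ x)^2 • (v' μ ν x - v μ ν x) := by
        intro ρ
        by_cases hρ : η ρ x = 0
        · simp [hρ]
        · have hxρ : x ∈ U ρ := hηU ρ x hρ
          rw [hrid _ (hTnorm ν ρ x hxν hxρ), hrid _ (hTnorm μ ρ x hxμ hxρ)]
          have hvv : v μ ν x * v ν ρ x = v μ ρ x := hv.2.2.2.2 μ ν ρ x ⟨⟨hxμ, hxν⟩, hxρ⟩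
          have hv'v : v' ρ μ x * v' μ ν x = v' ρ ν x := hv'.2.2.2.2 ρ μ ν x ⟨⟨hxρ, hxμ⟩, hxν⟩
          rw [mul_smul_comm, smul_mul_assoc, ← smul_add]
          congr 1
          simp only [hT]
          rw [mul_sub, mul_one, ← mul_assoc, hvv, sub_mul, one_mul, mul_assoc, hv'v]
          abel
      simp only [ha]
      rw [mul_add, mul_one, add_mul, one_mul, Finset.mul_sum, Finset.sum_mul]
      rw [Finset.sum_congr rfl (fun ρ _ => hterm ρ)]
      rw [Finset.sum_add_distrib, ← Finset.sum_smul, hηsum x, one_smul]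
      abel
    -- the key identity at t = 1
    have hkey1 : ∀ μ ν x, x ∈ U μ ∩ U ν →
        star (u μ 1 x) * v μ ν x * u ν 1 x = v' μ ν x := by
      intro μ ν x hx
      obtain ⟨hxμ, hxν⟩ := hx
      have hvx := hvU μ ν x ⟨hxμ, hxν⟩
      have hv'x := hv'U μ ν x ⟨hxμ, hxν⟩
      have haν : a ν x = star (v μ ν x) * a μ x * v' μ ν x := by
        have hg := hgauge μ ν x ⟨hxμ, hxν⟩
        calc a ν x = (star (v μ ν x) * v μ ν x) * a ν x := by rw [hvx.1, one_mul]
          _ = star (v μ ν x) * (v μ ν x * a ν x) := by rw [mul_assoc]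
          _ = star (v μ ν x) * (a μ x * v' μ ν x) := by rw [hg]
          _ = star (v μ ν x) * a μ x * v' μ ν x := by rw [mul_assoc]
      have hconj : star (a ν x) * a ν x
          = star (v' μ ν x) * (star (a μ x) * a μ x) * v' μ ν x := by
        rw [haν]
        have hcancel : ∀ z : A, v μ ν x * (star (v μ ν x) * z) = z := fun z => by
          rw [← mul_assoc, hvx.2, one_mul]
        simp only [star_mul, star_star, mul_assoc]
        rw [hcancel]
      have hsaμ : IsSelfAdjoint (star (a μ x) * a μ x) := IsSelfAdjoint.star_mul_self _
      have hspecμ : spectrum ℝ (star (a μ x) * a μ x) ⊆ Set.Icc (1/2:ℝ) (3/2) :=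
        spec_star_mul_self hεb hεle (hanorm μ x)
      have hconj2 : invSqrt (star (a ν x) * a ν x)
          = star (v' μ ν x) * invSqrt (star (a μ x) * a μ x) * v' μ ν x := by
        rw [hconj]
        exact invSqrt_conj hsaμ hspecμ hv'x.1 hv'x.2
      have hsu : star (a μ x * invSqrt (star (a μ x) * a μ x))
          * (a μ x * invSqrt (star (a μ x) * a μ x)) = 1 :=
        (unitarize hεb hεle (hanorm μ x)).1
      simp only [hu]
      rw [hb1 μ x, hb1 ν x, hconj2, haν]
      set s := invSqrt (star (a μ x) * a μ x) with hsdef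
      have hX : ∀ z : A, star (a μ x * s) * (a μ x * (s * z)) = z := by
        intro z
        rw [show a μ x * (s * z) = (a μ x * s) * z by rw [mul_assoc], ← mul_assoc, hsu, one_mul]
      have hc1 : ∀ z : A, v' μ ν x * (star (v' μ ν x) * z) = z := fun z => by
        rw [← mul_assoc, hv'x.2, one_mul]
      have hcV : ∀ z : A, v μ ν x * (star (v μ ν x) * z) = z := fun z => by
        rw [← mul_assoc, hvx.2, one_mul]
      simp only [mul_assoc]
      rw [hc1, hcV, hX]
    -- the homotopy
    refine ⟨fun μ ν t x => star (u μ t x) * v μ ν x * u ν t x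
      + τ t • (v' μ ν x - star (u μ 1 x) * v μ ν x * u ν 1 x), ?_, ?_, ?_⟩
    · -- joint continuity
      intro μ ν
      have hu1c : ∀ σ, Continuous fun q : X × ℝ => u σ 1 q.1 :=
        fun σ => (huc σ).comp (continuous_fst.prodMk continuous_const)
      exact ((((huc μ).star.mul ((hv.1 μ ν).comp continuous_fst)).mul (huc ν)).add
        (((hτc.comp continuous_snd)).smul ((((hv'.1 μ ν).comp continuous_fst)).sub
        (((hu1c μ).star.mul ((hv.1 μ ν).comp continuous_fst)).mul (hu1c ν))))).continuousOn
    · -- endpoints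
      intro μ ν x
      constructor
      · beta_reduce
        rw [hu0 μ x, hu0 ν x, hτzero, star_one, one_mul, mul_one, zero_smul, add_zero]
      · beta_reduce
        rw [hτone, one_smul]
        abel
    · -- cocycle and flatness at each time
      intro t _
      have hVsimp : ∀ μ ν x, x ∈ U μ ∩ U ν →
          star (u μ t x) * v μ ν x * u ν t x
            + τ t • (v' μ ν x - star (u μ 1 x) * v μ ν x * u ν 1 x)
          = star (u μ t x) * v μ ν x * u ν t x := by
        intro μ ν x hx
        rw [hkey1 μ ν x hx, sub_self, smul_zero, add_zero]
      constructor
      · refine ⟨?_, ?_, ?_, ?_, ?_⟩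
        · -- continuity in x for fixed t
          intro μ ν
          have hutc : ∀ σ, Continuous fun x : X => u σ t x :=
            fun σ => (huc σ).comp (continuous_id.prodMk continuous_const)
          have hu1c : ∀ σ, Continuous fun x : X => u σ 1 x :=
            fun σ => (huc σ).comp (continuous_id.prodMk continuous_const)
          exact (((hutc μ).star.mul (hv.1 μ ν)).mul (hutc ν)).add
            (continuous_const.smul ((hv'.1 μ ν).sub
              (((hu1c μ).star.mul (hv.1 μ ν)).mul (hu1c ν))))
        · -- unitarity
          intro μ ν x hx
          beta_reduce
          rw [hVsimp μ ν x hx]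
          have hvx := hvU μ ν x hx
          have cuμ : ∀ z : A, u μ t x * (star (u μ t x) * z) = z := fun z => by
            rw [← mul_assoc, (huprops μ t x).2.1, one_mul]
          have cuν : ∀ z : A, u ν t x * (star (u ν t x) * z) = z := fun z => by
            rw [← mul_assoc, (huprops ν t x).2.1, one_mul]
          have cv1 : ∀ z : A, star (v μ ν x) * (v μ ν x * z) = z := fun z => by
            rw [← mul_assoc, hvx.1, one_mul]
          have cv2 : ∀ z : A, v μ ν x * (star (v μ ν x) * z) = z := fun z => by
            rw [← mul_assoc, hvx.2, one_mul]
          rw [Unitary.mem_iff]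
          constructor
          · simp only [star_mul, star_star, mul_assoc]
            rw [cuμ, cv1]
            exact (huprops ν t x).1
          · simp only [star_mul, star_star, mul_assoc]
            rw [cuν, cv2]
            exact (huprops μ t x).1
        · -- star symmetry
          intro μ ν x hx
          have hx' : x ∈ U ν ∩ U μ := ⟨hx.2, hx.1⟩
          beta_reduce
          rw [hVsimp μ ν x hx, hVsimp ν μ x hx']
          simp only [star_mul, star_star, mul_assoc]
          rw [hv.2.2.1 μ ν x hx]
        · -- diagonal
          intro μ x hx
          have hxx : x ∈ U μ ∩ U μ := ⟨hx, hx⟩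
          beta_reduce
          rw [hVsimp μ μ x hxx, hv.2.2.2.1 μ x hx, mul_one]
          exact (huprops μ t x).1
        · -- cocycle identity
          intro μ ν σ x hx
          obtain ⟨⟨hμ, hν⟩, hσ⟩ := hx
          beta_reduce
          rw [hVsimp μ ν x ⟨hμ, hν⟩, hVsimp ν σ x ⟨hν, hσ⟩, hVsimp μ σ x ⟨hμ, hσ⟩]
          have cν : ∀ z : A, u ν t x * (star (u ν t x) * z) = z := fun z => by
            rw [← mul_assoc, (huprops ν t x).2.1, one_mul]
          simp only [mul_assoc]
          rw [cν, ← mul_assoc (v μ ν x), hv.2.2.2.2 μ ν σ x ⟨⟨hμ, hν⟩, hσ⟩]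
      · -- flatness
        intro μ ν x hx y hy
        beta_reduce
        rw [hVsimp μ ν x hx, hVsimp μ ν y hy]
        have hvxU := hvU μ ν x hx
        have hvyU := hvU μ ν y hy
        have hdec : star (u μ t x) * v μ ν x * u ν t x - star (u μ t y) * v μ ν y * u ν t y
            = (star (u μ t x) - star (u μ t y)) * v μ ν x * u ν t x
              + star (u μ t y) * (v μ ν x - v μ ν y) * u ν t x
              + star (u μ t y) * v μ ν y * (u ν t x - u ν t y) := by noncomm_ring
        rw [hdec]
        have h1 : ‖(star (u μ t x) - star (u μ t y)) * v μ ν x * u ν t x‖ ≤ 8 * ε := by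
          rw [norm_mul_unitary_right _ _ (huprops ν t x).2.1,
            norm_mul_unitary_right _ _ hvxU.2, ← star_sub, norm_star]
          exact huosc μ t x y
        have h2 : ‖star (u μ t y) * (v μ ν x - v μ ν y) * u ν t x‖ < ε := by
          rw [norm_mul_unitary_right _ _ (huprops ν t x).2.1,
            norm_unitary_mul_left (star (u μ t y)) _
              (by rw [star_star]; exact (huprops μ t y).2.1)]
          exact hvf μ ν x hx y hy
        have h3 : ‖star (u μ t y) * v μ ν y * (u ν t x - u ν t y)‖ ≤ 8 * ε := by
          have hP : star (star (u μ t y) * v μ ν y) * (star (u μ t y) * v μ ν y) = 1 := by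
            have cuμy : ∀ z : A, u μ t y * (star (u μ t y) * z) = z := fun z => by
              rw [← mul_assoc, (huprops μ t y).2.1, one_mul]
            simp only [star_mul, star_star, mul_assoc]
            rw [cuμy]
            exact hvyU.1
          rw [norm_unitary_mul_left _ _ hP]
          exact huosc ν t x y
        have hsum := norm_add₃_le (a := (star (u μ t x) - star (u μ t y)) * v μ ν x * u ν t x)
          (b := star (u μ t y) * (v μ ν x - v μ ν y) * u ν t x)
          (c := star (u μ t y) * v μ ν y * (u ν t x - u ν t y))
        have hfin : 8 * ε + ε + 8 * ε ≤ (4 * C₁ + 1) * ε := by nlinarith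
        linarith
end
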